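/- arXiv:1708.02897 — 6 statements merged into one kernel-verified Lean document; each statement's English description precedes it below -/
import Mathlib

section
/- Let X and Y be compact metric spaces, let E and F be smooth reflexive Banach spaces, and let Δ : Lip(X,E) → Lip(Y,F) be a 2-local standard isometry. Then for every x ∈ X and every u* in the unit sphere S_{E*} of the dual of E, the set A_{x,u*} is nonempty; moreover, ‖v*‖ = 1 for every (y,v*) ∈ A_{x,u*}. -/
open Function Metric Set
open scoped NNReal

/-- A function between a metric space and a normed space is bounded and Lipschitz. -/
def IsBddLip {X E : Type*} [MetricSpace X] [NormedAddCommGroup E] (f : X → E) : Prop :=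
  (∃ K : ℝ, ∀ x y : X, ‖f x - f y‖ ≤ K * dist x y) ∧ ∃ C : ℝ, ∀ x : X, ‖f x‖ ≤ C

/-- The Lipschitz constant `L(f)` of a function. -/
noncomputable def lipConst {X E : Type*} [MetricSpace X] [NormedAddCommGroup E] (f : X → E) : ℝ :=
  sInf {K : ℝ | 0 ≤ K ∧ ∀ x y : X, ‖f x - f y‖ ≤ K * dist x y}

/-- The norm `max {L(f), ‖f‖∞}` of the space `Lip(X,E)`. -/
noncomputable def lipNorm {X E : Type*} [MetricSpace X] [NormedAddCommGroup E] (f : X → E) : ℝ :=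
  max (lipConst f) (⨆ x : X, ‖f x‖)

/-- `T` is a surjective linear isometry from `Lip(X,E)` onto `Lip(Y,F)` (encoded on plain
functions, with all requirements imposed on bounded Lipschitz functions). -/
structure IsLipIso (𝕜 : Type*) {X Y E F : Type*} [RCLike 𝕜] [MetricSpace X] [MetricSpace Y]
    [NormedAddCommGroup E] [NormedSpace 𝕜 E] [NormedAddCommGroup F] [NormedSpace 𝕜 F]
    (T : (X → E) → (Y → F)) : Prop where
  mapsLip : ∀ f, IsBddLip f → IsBddLip (T f)
  map_add : ∀ f g, IsBddLip f → IsBddLip g → T (f + g) = T f + T g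
  map_smul : ∀ (c : 𝕜) (f), IsBddLip f → T (c • f) = c • T f
  norm_map : ∀ f, IsBddLip f → lipNorm (T f) = lipNorm f
  surjOn : ∀ g, IsBddLip g → ∃ f, IsBddLip f ∧ T f = g

/-- `Δ : Lip(X,E) → Lip(Y,F)` is a `2`-local isometry. -/
def Is2LocalLipIso (𝕜 : Type*) {X Y E F : Type*} [RCLike 𝕜] [MetricSpace X] [MetricSpace Y]
    [NormedAddCommGroup E] [NormedSpace 𝕜 E] [NormedAddCommGroup F] [NormedSpace 𝕜 F]
    (Δ : (X → E) → (Y → F)) : Prop :=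
  ∀ f g : X → E, IsBddLip f → IsBddLip g →
    ∃ T : (X → E) → (Y → F), IsLipIso 𝕜 T ∧ Δ f = T f ∧ Δ g = T g

/-- `φ` preserves distances less than `2`. -/
def PreservesDistLT2 {Y X : Type*} [MetricSpace Y] [MetricSpace X] (φ : Y → X) : Prop :=
  ∀ y y' : Y, dist y y' < 2 → dist (φ y) (φ y') = dist y y'

/-- Two points lie in the same `2`-component: they are joined by a finite chain of points with
consecutive distances less than `2`. -/
def SameTwoComponent {Y : Type*} [MetricSpace Y] : Y → Y → Prop :=
  Relation.ReflTransGen fun a b => dist a b < 2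

/-- `T` is a standard isometry from `Lip(X,E)` to `Lip(Y,F)`: there are `φ ∈ Iso_{<2}(Y,X)` and
`J : Y → Iso(E,F)` constant on `2`-components with `T f y = J y (f (φ y))`. -/
def IsStandardLipIso (𝕜 : Type*) {X Y E F : Type*} [RCLike 𝕜] [MetricSpace X] [MetricSpace Y]
    [NormedAddCommGroup E] [NormedSpace 𝕜 E] [NormedAddCommGroup F] [NormedSpace 𝕜 F]
    (T : (X → E) → (Y → F)) : Prop :=
  ∃ (φ : Y → X) (ψ : X → Y) (J : Y → E ≃ₗᵢ[𝕜] F),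
    Function.LeftInverse ψ φ ∧ Function.RightInverse ψ φ ∧
    PreservesDistLT2 φ ∧ PreservesDistLT2 ψ ∧
    (∀ y y' : Y, SameTwoComponent y y' → J y = J y') ∧
    ∀ f, IsBddLip f → ∀ y : Y, T f y = J y (f (φ y))

/-- `Δ : Lip(X,E) → Lip(Y,F)` is a `2`-local standard isometry. -/
def Is2LocalStdLipIso (𝕜 : Type*) {X Y E F : Type*} [RCLike 𝕜] [MetricSpace X] [MetricSpace Y]
    [NormedAddCommGroup E] [NormedSpace 𝕜 E] [NormedAddCommGroup F] [NormedSpace 𝕜 F]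
    (Δ : (X → E) → (Y → F)) : Prop :=
  ∀ f g : X → E, IsBddLip f → IsBddLip g →
    ∃ T : (X → E) → (Y → F), IsStandardLipIso 𝕜 T ∧ Δ f = T f ∧ Δ g = T g

/-- A normed space is smooth: every norm-one vector has a unique norm-one supporting functional. -/
def IsSmooth (𝕜 : Type*) (E : Type*) [RCLike 𝕜] [NormedAddCommGroup E] [NormedSpace 𝕜 E] :
    Prop :=
  ∀ e : E, ‖e‖ = 1 → ∃! u : StrongDual 𝕜 E, ‖u‖ = 1 ∧ u e = 1

/-- A normed space is reflexive: the canonical inclusion in the double dual is onto. -/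
def IsReflexiveSp (𝕜 : Type*) (E : Type*) [RCLike 𝕜] [NormedAddCommGroup E] [NormedSpace 𝕜 E] :
    Prop :=
  Function.Surjective (NormedSpace.inclusionInDoubleDual 𝕜 E)

/-- `E` is `2`-iso-reflexive: every `2`-local isometry on `E` is linear and surjective. -/
def TwoIsoReflexive (𝕜 : Type*) (E : Type*) [RCLike 𝕜] [NormedAddCommGroup E] [NormedSpace 𝕜 E] :
    Prop :=
  ∀ Δ : E → E, (∀ a b : E, ∃ T : E ≃ₗᵢ[𝕜] E, Δ a = T a ∧ Δ b = T b) →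
    (∀ a b : E, Δ (a + b) = Δ a + Δ b) ∧ (∀ (c : 𝕜) (a : E), Δ (c • a) = c • Δ a) ∧
      Function.Surjective Δ

/-- The set `A_{x,u*,f} = {(y,v*) ∈ Y × B_{F*} : v*(Δ(f)(y)) = u*(f(x))}`. -/
def setA (𝕜 : Type*) {X Y E F : Type*} [RCLike 𝕜] [MetricSpace X] [MetricSpace Y]
    [NormedAddCommGroup E] [NormedSpace 𝕜 E] [NormedAddCommGroup F] [NormedSpace 𝕜 F]
    (Δ : (X → E) → (Y → F)) (x : X) (u : StrongDual 𝕜 E) (f : X → E) :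
    Set (Y × StrongDual 𝕜 F) :=
  {p | ‖p.2‖ ≤ 1 ∧ p.2 (Δ f p.1) = u (f x)}

/-- The set `A_{x,u*} = ⋂_{f ∈ Lip(X,E)} A_{x,u*,f}`. -/
def setAInter (𝕜 : Type*) {X Y E F : Type*} [RCLike 𝕜] [MetricSpace X] [MetricSpace Y]
    [NormedAddCommGroup E] [NormedSpace 𝕜 E] [NormedAddCommGroup F] [NormedSpace 𝕜 F]
    (Δ : (X → E) → (Y → F)) (x : X) (u : StrongDual 𝕜 E) :
    Set (Y × StrongDual 𝕜 F) :=
  ⋂ f ∈ {f : X → E | IsBddLip f}, setA 𝕜 Δ x u f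

/-- Lemma 2.1 (standard-isometry case): the sets `A_{x,u*}` are nonempty and consist of pairs
whose second component is a norm-one functional. -/
theorem stmt0 {𝕜 X Y E F : Type*} [RCLike 𝕜]
    [MetricSpace X] [CompactSpace X] [MetricSpace Y] [CompactSpace Y]
    [NormedAddCommGroup E] [NormedSpace 𝕜 E] [CompleteSpace E]
    [NormedAddCommGroup F] [NormedSpace 𝕜 F] [CompleteSpace F]
    (hEsm : IsSmooth 𝕜 E) (hErefl : IsReflexiveSp 𝕜 E)
    (hFsm : IsSmooth 𝕜 F) (hFrefl : IsReflexiveSp 𝕜 F)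
    (Δ : (X → E) → (Y → F)) (hΔ : Is2LocalStdLipIso 𝕜 Δ)
    (x : X) (u : StrongDual 𝕜 E) (hu : ‖u‖ = 1) :
    (setAInter 𝕜 Δ x u).Nonempty ∧ ∀ p ∈ setAInter 𝕜 Δ x u, ‖p.2‖ = 1 := by
  
  classical
  -- ### Step 1: find a norm-one vector `e` with `u e = 1`, using reflexivity of `E`.
  have hu0 : u ≠ 0 := by intro h; rw [h] at hu; simp at hu
  obtain ⟨g, hg1, hgu⟩ := exists_dual_vector 𝕜 u (norm_ne_zero_iff.mpr hu0)
  obtain ⟨e, he⟩ := hErefl g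
  have hue : u e = 1 := by
    have h1 : NormedSpace.inclusionInDoubleDual 𝕜 E e u = u e := rfl
    rw [he, hgu, hu] at h1
    simpa using h1.symm
  have hnorme : ‖e‖ = 1 := by
    have : ‖NormedSpace.inclusionInDoubleDualLi 𝕜 (E := E) e‖ = ‖e‖ :=
      (NormedSpace.inclusionInDoubleDualLi 𝕜).norm_map e
    have h2 : NormedSpace.inclusionInDoubleDualLi 𝕜 (E := E) e
        = NormedSpace.inclusionInDoubleDual 𝕜 E e := rfl
    rw [h2, he] at this
    rw [← this, hg1]
  -- ### Step 2: the constant function `f₀ = e` and the peaking function `h`.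
  set f₀ : X → E := fun _ => e with hf₀def
  have hf₀ : IsBddLip f₀ := by
    refine ⟨⟨0, fun a b => by simp [hf₀def]⟩, ⟨1, fun a => by simp [hf₀def, hnorme]⟩⟩
  set m : X → ℝ := fun z => max (1 - dist z x) 0 with hmdef
  have hm_nonneg : ∀ z, 0 ≤ m z := fun z => le_max_right _ _
  have hm_le_one : ∀ z, m z ≤ 1 := fun z => by
    have := dist_nonneg (x := z) (y := x)
    simp only [hmdef]
    refine max_le (by linarith) zero_le_one
  set h : X → E := fun z => ((m z : ℝ) : 𝕜) • e with hhdef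
  have hm_lip : ∀ a b : X, |m a - m b| ≤ dist a b := by
    intro a b
    have h1 : |m a - m b| ≤ |(1 - dist a x) - (1 - dist b x)| :=
      abs_max_sub_max_le_abs _ _ _
    have h2 : |(1 - dist a x) - (1 - dist b x)| = |dist b x - dist a x| := by
      rw [show (1 - dist a x) - (1 - dist b x) = dist b x - dist a x by ring]
    have h3 : |dist b x - dist a x| ≤ dist b a := abs_dist_sub_le b a x
    rw [dist_comm b a] at h3
    calc |m a - m b| ≤ |dist b x - dist a x| := h2 ▸ h1
      _ ≤ dist a b := h3
  have hnormh : ∀ z, ‖h z‖ = m z := by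
    intro z
    simp only [hhdef, norm_smul, hnorme, mul_one, RCLike.norm_ofReal]
    exact abs_of_nonneg (hm_nonneg z)
  have hh : IsBddLip h := by
    constructor
    · refine ⟨1, fun a b => ?_⟩
      have : h a - h b = (((m a - m b : ℝ) : 𝕜)) • e := by
        simp [hhdef, sub_smul]
      rw [this, norm_smul, hnorme, mul_one, RCLike.norm_ofReal, one_mul]
      exact hm_lip a b
    · exact ⟨1, fun z => by rw [hnormh]; exact hm_le_one z⟩
  have hhx : h x = e := by simp [hhdef, hmdef]
  -- ### Step 3: a standard isometry for the pair `(f₀, h)`.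
  obtain ⟨T, ⟨φ, ψ, J, hψφ, hφψ, -, -, -, hTrep⟩, hTf₀, hTh⟩ := hΔ f₀ h hf₀ hh
  set y₀ : Y := ψ x with hy₀def
  have hφy₀ : φ y₀ = x := hφψ x
  have hΔhy₀ : Δ h y₀ = J y₀ e := by
    rw [hTh, hTrep h hh y₀, hφy₀, hhx]
  have hξnorm : ‖Δ h y₀‖ = 1 := by rw [hΔhy₀, (J y₀).norm_map, hnorme]
  -- ### Step 4: the candidate functional `w = u ∘ (J y₀)⁻¹`.
  set w : StrongDual 𝕜 F :=
    u.comp ((J y₀).symm.toContinuousLinearEquiv : F ≃L[𝕜] E).toContinuousLinearMap with hwdef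
  have hw_apply : ∀ z : F, w z = u ((J y₀).symm z) := fun z => rfl
  have hw_le : ‖w‖ ≤ 1 := by
    refine ContinuousLinearMap.opNorm_le_bound _ zero_le_one fun z => ?_
    rw [hw_apply, one_mul]
    calc ‖u ((J y₀).symm z)‖ ≤ ‖u‖ * ‖(J y₀).symm z‖ := u.le_opNorm _
      _ = ‖z‖ := by rw [hu, one_mul, (J y₀).symm.norm_map]
  have hwξ : w (Δ h y₀) = 1 := by
    rw [hΔhy₀, hw_apply, (J y₀).symm_apply_apply, hue]
  have hw1 : ‖w‖ = 1 := by
    refine le_antisymm hw_le ?_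
    have := w.le_opNorm (Δ h y₀)
    rw [hwξ, hξnorm, mul_one] at this
    simpa using this
  -- ### Step 5: `(y₀, w)` belongs to every `A_{x,u,f}`.
  have hmem : (y₀, w) ∈ setAInter 𝕜 Δ x u := by
    simp only [setAInter, Set.mem_iInter, Set.mem_setOf_eq]
    intro f hf
    refine ⟨hw_le, ?_⟩
    obtain ⟨T', ⟨φ', ψ', J', hψφ', hφψ', -, -, -, hTrep'⟩, hT'h, hT'f⟩ := hΔ h f hh hf
    -- `φ' y₀ = x` since `h` peaks exactly at `x`.
    have hrep : Δ h y₀ = J' y₀ (h (φ' y₀)) := by rw [hT'h, hTrep' h hh y₀]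
    have hφ'y₀ : φ' y₀ = x := by
      have h1 : ‖h (φ' y₀)‖ = 1 := by
        rw [← (J' y₀).norm_map, ← hrep, hξnorm]
      rw [hnormh] at h1
      have h2 : dist (φ' y₀) x = 0 := by
        rcases max_cases (1 - dist (φ' y₀) x) 0 with ⟨hm, _⟩ | ⟨hm, _⟩ <;>
          rw [hmdef] at h1 <;> simp only at h1 <;> rw [hm] at h1 <;> linarith
      exact eq_of_dist_eq_zero h2
    have hhe : h (φ' y₀) = e := by rw [hφ'y₀, hhx]
    -- By smoothness of `F`, `w = u ∘ (J' y₀)⁻¹`.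
    set w' : StrongDual 𝕜 F :=
      u.comp ((J' y₀).symm.toContinuousLinearEquiv : F ≃L[𝕜] E).toContinuousLinearMap with hw'def
    have hw'_apply : ∀ z : F, w' z = u ((J' y₀).symm z) := fun z => rfl
    have hw'_le : ‖w'‖ ≤ 1 := by
      refine ContinuousLinearMap.opNorm_le_bound _ zero_le_one fun z => ?_
      rw [hw'_apply, one_mul]
      calc ‖u ((J' y₀).symm z)‖ ≤ ‖u‖ * ‖(J' y₀).symm z‖ := u.le_opNorm _
        _ = ‖z‖ := by rw [hu, one_mul, (J' y₀).symm.norm_map]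
    have hw'ξ : w' (Δ h y₀) = 1 := by
      rw [hrep, hhe, hw'_apply, (J' y₀).symm_apply_apply, hue]
    have hw'1 : ‖w'‖ = 1 := by
      refine le_antisymm hw'_le ?_
      have := w'.le_opNorm (Δ h y₀)
      rw [hw'ξ, hξnorm, mul_one] at this
      simpa using this
    obtain ⟨v, -, hvuniq⟩ := hFsm (Δ h y₀) hξnorm
    have hww' : w = w' := by
      rw [hvuniq w ⟨hw1, hwξ⟩, hvuniq w' ⟨hw'1, hw'ξ⟩]
    rw [hww', hT'f, hTrep' f hf y₀, hφ'y₀, hw'_apply, (J' y₀).symm_apply_apply]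
  refine ⟨⟨(y₀, w), hmem⟩, ?_⟩
  -- ### Step 6: every element of `A_{x,u}` has a norm-one functional.
  intro p hp
  simp only [setAInter, Set.mem_iInter, Set.mem_setOf_eq] at hp
  obtain ⟨hple, hpeq⟩ := hp f₀ hf₀
  have hux : u (f₀ x) = 1 := hue
  obtain ⟨T'', ⟨φ'', ψ'', J'', -, -, -, -, -, hTrep''⟩, hT''f₀, -⟩ := hΔ f₀ f₀ hf₀ hf₀
  have hΔf₀ : ‖Δ f₀ p.1‖ = 1 := by
    rw [hT''f₀, hTrep'' f₀ hf₀ p.1]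
    rw [(J'' p.1).norm_map]
    exact hnorme
  refine le_antisymm hple ?_
  have := p.2.le_opNorm (Δ f₀ p.1)
  rw [hpeq, hux, hΔf₀, mul_one] at this
  simpa using this
end

section
/- Let X and Y be compact metric spaces, let E and F be smooth reflexive Banach spaces, and let Δ : Lip(X,E) → Lip(Y,F) be a 2-local standard isometry. Then for every x ∈ X, every u* in the closed unit ball B_{E*} of the dual of E, and every f ∈ Lip(X,E), the set A_{x,u*,f} is nonempty and is a closed subset of Y × B_{F*}, where B_{F*} carries the weak topology and Y × B_{F*} the product topology. -/
open Function Metric Set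
open scoped NNReal

/-- Each set `A_{x,u*,f}` is nonempty and closed in `Y × B_{F*}`, where `B_{F*}` carries the
weak (weak-*) topology. -/
theorem stmt2 {𝕜 X Y E F : Type*} [RCLike 𝕜]
    [MetricSpace X] [CompactSpace X] [MetricSpace Y] [CompactSpace Y]
    [NormedAddCommGroup E] [NormedSpace 𝕜 E] [CompleteSpace E]
    [NormedAddCommGroup F] [NormedSpace 𝕜 F] [CompleteSpace F]
    (hEsm : IsSmooth 𝕜 E) (hErefl : IsReflexiveSp 𝕜 E)
    (hFsm : IsSmooth 𝕜 F) (hFrefl : IsReflexiveSp 𝕜 F)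
    (Δ : (X → E) → (Y → F)) (hΔ : Is2LocalStdLipIso 𝕜 Δ)
    (x : X) (u : StrongDual 𝕜 E) (hu : ‖u‖ ≤ 1) (f : X → E) (hf : IsBddLip f) :
    (setA 𝕜 Δ x u f).Nonempty ∧
      IsClosed {p : Y × {v : WeakDual 𝕜 F // ‖WeakDual.toStrongDual v‖ ≤ 1} |
        (WeakDual.toStrongDual (p.2 : WeakDual 𝕜 F)) (Δ f p.1) = u (f x)} := by
  obtain ⟨T, ⟨φ, ψ, J, hψφ, hφψ, hφd, hψd, hJ, hT⟩, hΔf, -⟩ := hΔ f f hf hf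
  have hz : ∀ y : Y, Δ f y = J y (f (φ y)) := by
    intro y; rw [hΔf]; exact hT f hf y
  obtain ⟨⟨K, hK⟩, -⟩ := hf
  set K' : ℝ := max K 0 with hK'
  have hK'0 : 0 ≤ K' := le_max_right _ _
  have hK'b : ∀ a b : X, ‖f a - f b‖ ≤ K' * dist a b := fun a b =>
    (hK a b).trans (mul_le_mul_of_nonneg_right (le_max_left _ _) dist_nonneg)
  -- continuity of Δ f
  have hzc : Continuous fun y : Y => Δ f y := by
    rw [continuous_iff_continuousAt]
    intro y₀
    rw [Metric.continuousAt_iff]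
    intro ε hε
    refine ⟨min 1 (ε / (K' + 1)), lt_min one_pos (div_pos hε (by linarith)), fun {y} hy => ?_⟩
    have hylt : dist y y₀ < 2 := lt_of_lt_of_le (lt_of_lt_of_le hy (min_le_left _ _)) one_le_two
    have hJeq : J y = J y₀ := hJ y y₀ (Relation.ReflTransGen.single hylt)
    have hd : dist (φ y) (φ y₀) = dist y y₀ := hφd y y₀ hylt
    have : dist (Δ f y) (Δ f y₀) ≤ K' * dist y y₀ := by
      rw [hz, hz, hJeq, dist_eq_norm, ← map_sub, (J y₀).norm_map, ← hd]
      exact hK'b _ _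
    have h2 : dist y y₀ < ε / (K' + 1) := lt_of_lt_of_le hy (min_le_right _ _)
    have hd0 : (0:ℝ) ≤ dist y y₀ := dist_nonneg
    have h3 : dist y y₀ * (K' + 1) < ε := (lt_div_iff₀ (by linarith)).mp h2
    calc dist (Δ f y) (Δ f y₀) ≤ K' * dist y y₀ := this
      _ < ε := by nlinarith
  constructor
  · -- nonemptiness
    refine ⟨⟨ψ x, u.comp (J (ψ x)).symm.toLinearIsometry.toContinuousLinearMap⟩, ?_, ?_⟩
    · refine (ContinuousLinearMap.opNorm_comp_le _ _).trans ?_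
      have h1 : ‖(J (ψ x)).symm.toLinearIsometry.toContinuousLinearMap‖ ≤ 1 :=
        (J (ψ x)).symm.toLinearIsometry.norm_toContinuousLinearMap_le
      calc ‖u‖ * ‖(J (ψ x)).symm.toLinearIsometry.toContinuousLinearMap‖
          ≤ 1 * 1 := mul_le_mul hu h1 (norm_nonneg _) zero_le_one
        _ = 1 := one_mul 1
    · show u ((J (ψ x)).symm (Δ f (ψ x))) = u (f x)
      rw [hz, hφψ x, LinearIsometryEquiv.symm_apply_apply]
  · -- closedness
    have hg : Continuous fun p : Y × {v : WeakDual 𝕜 F // ‖WeakDual.toStrongDual v‖ ≤ 1} =>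
        (WeakDual.toStrongDual (p.2 : WeakDual 𝕜 F)) (Δ f p.1) := by
      rw [continuous_iff_continuousAt]
      intro p₀
      have hc1 : Filter.Tendsto (fun p : Y × {v : WeakDual 𝕜 F // ‖WeakDual.toStrongDual v‖ ≤ 1} =>
          (WeakDual.toStrongDual (p.2 : WeakDual 𝕜 F)) (Δ f p.1) -
          (WeakDual.toStrongDual (p.2 : WeakDual 𝕜 F)) (Δ f p₀.1)) (nhds p₀) (nhds 0) := by
        rw [tendsto_zero_iff_norm_tendsto_zero]
        refine squeeze_zero (g := fun p : Y × {v : WeakDual 𝕜 F // ‖WeakDual.toStrongDual v‖ ≤ 1} =>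
            ‖Δ f p.1 - Δ f p₀.1‖) (fun p => norm_nonneg _) (fun p => ?_) ?_
        · show ‖_‖ ≤ ‖Δ f p.1 - Δ f p₀.1‖
          rw [← map_sub]
          calc ‖(WeakDual.toStrongDual (p.2 : WeakDual 𝕜 F)) (Δ f p.1 - Δ f p₀.1)‖
              ≤ ‖WeakDual.toStrongDual (p.2 : WeakDual 𝕜 F)‖ * ‖Δ f p.1 - Δ f p₀.1‖ :=
                ContinuousLinearMap.le_opNorm _ _
            _ ≤ 1 * ‖Δ f p.1 - Δ f p₀.1‖ :=
                mul_le_mul_of_nonneg_right p.2.2 (norm_nonneg _)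
            _ = ‖Δ f p.1 - Δ f p₀.1‖ := one_mul _
        · have : Continuous fun p : Y × {v : WeakDual 𝕜 F // ‖WeakDual.toStrongDual v‖ ≤ 1} =>
              ‖Δ f p.1 - Δ f p₀.1‖ :=
            ((hzc.comp continuous_fst).sub continuous_const).norm
          simpa using this.tendsto p₀
      have hc2 : Filter.Tendsto (fun p : Y × {v : WeakDual 𝕜 F // ‖WeakDual.toStrongDual v‖ ≤ 1} =>
          (WeakDual.toStrongDual (p.2 : WeakDual 𝕜 F)) (Δ f p₀.1)) (nhds p₀)
          (nhds ((WeakDual.toStrongDual (p₀.2 : WeakDual 𝕜 F)) (Δ f p₀.1))) := by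
        have : Continuous fun p : Y × {v : WeakDual 𝕜 F // ‖WeakDual.toStrongDual v‖ ≤ 1} =>
            ((p.2 : WeakDual 𝕜 F) (Δ f p₀.1)) :=
          (WeakDual.eval_continuous (Δ f p₀.1)).comp (continuous_subtype_val.comp continuous_snd)
        exact this.continuousAt
      have := hc1.add hc2
      simpa [ContinuousAt] using this
    have : {p : Y × {v : WeakDual 𝕜 F // ‖WeakDual.toStrongDual v‖ ≤ 1} |
        (WeakDual.toStrongDual (p.2 : WeakDual 𝕜 F)) (Δ f p.1) = u (f x)} =
        (fun p : Y × {v : WeakDual 𝕜 F // ‖WeakDual.toStrongDual v‖ ≤ 1} =>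
          (WeakDual.toStrongDual (p.2 : WeakDual 𝕜 F)) (Δ f p.1)) ⁻¹' {u (f x)} := rfl
    rw [this]
    exact IsClosed.preimage hg isClosed_singleton
end

section
/- Let X and Y be compact metric spaces, let E and F be smooth reflexive Banach spaces, and let Δ : Lip(X,E) → Lip(Y,F) be a 2-local standard isometry. Let y ∈ Y, x_1, x_2 ∈ X, u_1*, u_2* ∈ S_{E*} and v_1*, v_2* ∈ S_{F*}. If (y,v_1*) ∈ A_{x_1,u_1*} and (y,v_2*) ∈ A_{x_2,u_2*}, then x_1 = x_2. -/
open Function Metric Set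
open scoped NNReal

lemma peak_bddLip {𝕜 X E : Type*} [RCLike 𝕜] [MetricSpace X] [NormedAddCommGroup E]
    [NormedSpace 𝕜 E] (a : X) (r : ℝ) (hr : 0 < r) (e : E) (he : ‖e‖ ≤ 1) :
    IsBddLip (fun x : X => ((max 0 (1 - dist x a / r) : ℝ) : 𝕜) • e) := by
  constructor
  · refine ⟨1 / r, fun x z => ?_⟩
    have hsub : ((max 0 (1 - dist x a / r) : ℝ) : 𝕜) • e -
        ((max 0 (1 - dist z a / r) : ℝ) : 𝕜) • e
        = ((max 0 (1 - dist x a / r) - max 0 (1 - dist z a / r) : ℝ) : 𝕜) • e := by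
      push_cast; rw [sub_smul]
    rw [hsub, norm_smul, RCLike.norm_ofReal]
    have h1 : |max 0 (1 - dist x a / r) - max 0 (1 - dist z a / r)|
        ≤ |(1 - dist x a / r) - (1 - dist z a / r)| := by
      rw [max_comm 0 (1 - dist x a / r), max_comm 0 (1 - dist z a / r)]
      exact abs_max_sub_max_le_abs _ _ _
    have h2 : |(1 - dist x a / r) - (1 - dist z a / r)| ≤ dist x z / r := by
      have : (1 - dist x a / r) - (1 - dist z a / r) = (dist z a - dist x a) / r := by ring
      rw [this, abs_div, abs_of_pos hr]
      have := abs_dist_sub_le z x a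
      gcongr
      rwa [dist_comm z x] at this
    calc |max 0 (1 - dist x a / r) - max 0 (1 - dist z a / r)| * ‖e‖
        ≤ (dist x z / r) * 1 := by
          apply mul_le_mul (h1.trans h2) he (norm_nonneg _)
          positivity
      _ = 1 / r * dist x z := by ring
  · refine ⟨1, fun x => ?_⟩
    rw [norm_smul, RCLike.norm_ofReal, abs_of_nonneg (le_max_left _ _)]
    have hm : max 0 (1 - dist x a / r) ≤ 1 :=
      max_le zero_le_one (by
        have : 0 ≤ dist x a / r := by positivity
        linarith)
    calc max 0 (1 - dist x a / r) * ‖e‖ ≤ 1 * 1 :=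
          mul_le_mul hm he (norm_nonneg _) zero_le_one
      _ = 1 := one_mul 1

lemma peak_dist_lt {𝕜 E F X : Type*} [RCLike 𝕜] [NormedAddCommGroup E] [NormedSpace 𝕜 E]
    [NormedAddCommGroup F] [NormedSpace 𝕜 F] [MetricSpace X]
    (a z : X) (r : ℝ) (hr : 0 < r) (e : E) (he : ‖e‖ ≤ 1)
    (u : StrongDual 𝕜 E) (hu : 1 / 2 < ‖u e‖)
    (v : StrongDual 𝕜 F) (hv : ‖v‖ = 1)
    (J : E ≃ₗᵢ[𝕜] F)
    (hvJ : v (J (((max 0 (1 - dist z a / r) : ℝ) : 𝕜) • e)) = u e) :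
    dist z a < r / 2 := by
  have h1 : ‖u e‖ ≤ max 0 (1 - dist z a / r) := by
    calc ‖u e‖ = ‖v (J (((max 0 (1 - dist z a / r) : ℝ) : 𝕜) • e))‖ := by rw [hvJ]
      _ ≤ ‖v‖ * ‖J (((max 0 (1 - dist z a / r) : ℝ) : 𝕜) • e)‖ := v.le_opNorm _
      _ = ‖((max 0 (1 - dist z a / r) : ℝ) : 𝕜) • e‖ := by rw [hv, one_mul, J.norm_map]
      _ = max 0 (1 - dist z a / r) * ‖e‖ := by
          rw [norm_smul, RCLike.norm_ofReal, abs_of_nonneg (le_max_left _ _)]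
      _ ≤ max 0 (1 - dist z a / r) * 1 :=
          mul_le_mul_of_nonneg_left he (le_max_left _ _)
      _ = max 0 (1 - dist z a / r) := mul_one _
  have h2 : 1 / 2 < 1 - dist z a / r := by
    by_contra h
    push_neg at h
    have : max 0 (1 - dist z a / r) ≤ 1 / 2 := max_le (by norm_num) h
    linarith
  have h3 : dist z a / r < 1 / 2 := by linarith
  have := (div_lt_iff₀ hr).mp h3
  linarith

/-- Lemma 2.2(a): the first coordinate `x` is uniquely determined. -/
theorem stmt3 {𝕜 X Y E F : Type*} [RCLike 𝕜]
    [MetricSpace X] [CompactSpace X] [MetricSpace Y] [CompactSpace Y]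
    [NormedAddCommGroup E] [NormedSpace 𝕜 E] [CompleteSpace E]
    [NormedAddCommGroup F] [NormedSpace 𝕜 F] [CompleteSpace F]
    (hEsm : IsSmooth 𝕜 E) (hErefl : IsReflexiveSp 𝕜 E)
    (hFsm : IsSmooth 𝕜 F) (hFrefl : IsReflexiveSp 𝕜 F)
    (Δ : (X → E) → (Y → F)) (hΔ : Is2LocalStdLipIso 𝕜 Δ)
    (y : Y) (x₁ x₂ : X) (u₁ u₂ : StrongDual 𝕜 E) (v₁ v₂ : StrongDual 𝕜 F)
    (hu₁ : ‖u₁‖ = 1) (hu₂ : ‖u₂‖ = 1) (hv₁ : ‖v₁‖ = 1) (hv₂ : ‖v₂‖ = 1)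
    (h₁ : (y, v₁) ∈ setAInter 𝕜 Δ x₁ u₁) (h₂ : (y, v₂) ∈ setAInter 𝕜 Δ x₂ u₂) :
    x₁ = x₂ := by
  by_contra hne
  have hd : 0 < dist x₁ x₂ := dist_pos.mpr hne
  set r : ℝ := dist x₁ x₂ with hrdef
  obtain ⟨e₁, he₁, hue₁⟩ : ∃ e : E, ‖e‖ ≤ 1 ∧ (1 / 2 : ℝ) < ‖u₁ e‖ := by
    obtain ⟨e, he, h⟩ := u₁.exists_lt_apply_of_lt_opNorm (r := 1 / 2) (by rw [hu₁]; norm_num)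
    exact ⟨e, he.le, h⟩
  obtain ⟨e₂, he₂, hue₂⟩ : ∃ e : E, ‖e‖ ≤ 1 ∧ (1 / 2 : ℝ) < ‖u₂ e‖ := by
    obtain ⟨e, he, h⟩ := u₂.exists_lt_apply_of_lt_opNorm (r := 1 / 2) (by rw [hu₂]; norm_num)
    exact ⟨e, he.le, h⟩
  set f : X → E := fun x => ((max 0 (1 - dist x x₁ / r) : ℝ) : 𝕜) • e₁ with hfdef
  set g : X → E := fun x => ((max 0 (1 - dist x x₂ / r) : ℝ) : 𝕜) • e₂ with hgdef
  have hf : IsBddLip f := peak_bddLip x₁ r hd e₁ he₁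
  have hg : IsBddLip g := peak_bddLip x₂ r hd e₂ he₂
  obtain ⟨T, ⟨φ, ψ, J, -, -, -, -, -, hT⟩, hΔf, hΔg⟩ := hΔ f g hf hg
  have hfx₁ : f x₁ = e₁ := by simp [hfdef]
  have hgx₂ : g x₂ = e₂ := by simp [hgdef]
  have m₁ : v₁ (Δ f y) = u₁ (f x₁) := (Set.mem_iInter₂.mp h₁ f hf).2
  have m₂ : v₂ (Δ g y) = u₂ (g x₂) := (Set.mem_iInter₂.mp h₂ g hg).2
  have hΔfy : Δ f y = J y (f (φ y)) := by rw [hΔf]; exact hT f hf y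
  have hΔgy : Δ g y = J y (g (φ y)) := by rw [hΔg]; exact hT g hg y
  have k₁ : dist (φ y) x₁ < r / 2 := by
    refine peak_dist_lt x₁ (φ y) r hd e₁ he₁ u₁ hue₁ v₁ hv₁ (J y) ?_
    have hrfl : (((max 0 (1 - dist (φ y) x₁ / r) : ℝ)) : 𝕜) • e₁ = f (φ y) := rfl
    rw [hrfl, ← hΔfy, m₁, hfx₁]
  have k₂ : dist (φ y) x₂ < r / 2 := by
    refine peak_dist_lt x₂ (φ y) r hd e₂ he₂ u₂ hue₂ v₂ hv₂ (J y) ?_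
    have hrfl : (((max 0 (1 - dist (φ y) x₂ / r) : ℝ)) : 𝕜) • e₂ = g (φ y) := rfl
    rw [hrfl, ← hΔgy, m₂, hgx₂]
  have htri : dist x₁ x₂ ≤ dist x₁ (φ y) + dist (φ y) x₂ := dist_triangle _ _ _
  rw [dist_comm x₁ (φ y)] at htri
  rw [← hrdef] at htri
  linarith
end

section
/- Let X and Y be compact metric spaces, let E and F be smooth reflexive Banach spaces, and let Δ : Lip(X,E) → Lip(Y,F) be a 2-local standard isometry. Let y ∈ Y, x_0 ∈ X, v* ∈ S_{F*} and u_1*, u_2* ∈ S_{E*}. If (y,v*) ∈ A_{x_0,u_1*} and (y,v*) ∈ A_{x_0,u_2*}, then u_1* = u_2*. -/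
open Function Metric Set
open scoped NNReal

/-- Lemma 2.2(b): the functional `u*` is uniquely determined. -/
theorem stmt4 {𝕜 X Y E F : Type*} [RCLike 𝕜]
    [MetricSpace X] [CompactSpace X] [MetricSpace Y] [CompactSpace Y]
    [NormedAddCommGroup E] [NormedSpace 𝕜 E] [CompleteSpace E]
    [NormedAddCommGroup F] [NormedSpace 𝕜 F] [CompleteSpace F]
    (hEsm : IsSmooth 𝕜 E) (hErefl : IsReflexiveSp 𝕜 E)
    (hFsm : IsSmooth 𝕜 F) (hFrefl : IsReflexiveSp 𝕜 F)
    (Δ : (X → E) → (Y → F)) (hΔ : Is2LocalStdLipIso 𝕜 Δ)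
    (y : Y) (x₀ : X) (v : StrongDual 𝕜 F) (u₁ u₂ : StrongDual 𝕜 E)
    (hv : ‖v‖ = 1) (hu₁ : ‖u₁‖ = 1) (hu₂ : ‖u₂‖ = 1)
    (h₁ : (y, v) ∈ setAInter 𝕜 Δ x₀ u₁) (h₂ : (y, v) ∈ setAInter 𝕜 Δ x₀ u₂) :
    u₁ = u₂ := by
  apply ContinuousLinearMap.ext
  intro e
  have hf : IsBddLip (fun _ : X => e) :=
    ⟨⟨0, fun x y => by simp⟩, ⟨‖e‖, fun x => le_refl _⟩⟩
  have h1 := (Set.mem_iInter₂.mp h₁) _ hf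
  have h2 := (Set.mem_iInter₂.mp h₂) _ hf
  exact h1.2.symm.trans h2.2
end

section
/- Let X and Y be compact metric spaces, and let E be a smooth reflexive Banach space which is 2-iso-reflexive. Suppose that Δ is a 2-local standard isometry from Lip(X,E) to Lip(Y,E). Then there exist a Lipschitz homeomorphism ψ from Y onto X (a Lipschitz bijection whose inverse is Lipschitz) and a map V from Y into Iso(E), continuous when Iso(E) is endowed with the strong operator topology, such that Δ(f)(y) = V(y)(f(ψ(y))) for all y ∈ Y and all f ∈ Lip(X,E). Moreover, Δ is a surjective linear isometry. -/
open Function Metric Set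
open scoped NNReal

section AuxLemmas

variable {𝕜 A B E : Type*} [RCLike 𝕜] [MetricSpace A] [MetricSpace B]
  [NormedAddCommGroup E] [NormedSpace 𝕜 E]

lemma aux_bddLip_const (e : E) : IsBddLip (fun _ : A => e) :=
  ⟨⟨0, fun x y => by simp⟩, ⟨‖e‖, fun x => le_refl _⟩⟩

lemma aux_bddLip_zero : IsBddLip (0 : A → E) :=
  ⟨⟨0, fun x y => by simp⟩, ⟨0, fun x => by simp⟩⟩

lemma aux_bddLip_add {f g : A → E} (hf : IsBddLip f) (hg : IsBddLip g) :
    IsBddLip (f + g) := by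
  obtain ⟨⟨K1, hK1⟩, ⟨C1, hC1⟩⟩ := hf
  obtain ⟨⟨K2, hK2⟩, ⟨C2, hC2⟩⟩ := hg
  refine ⟨⟨K1 + K2, fun x y => ?_⟩, ⟨C1 + C2, fun x => ?_⟩⟩
  · have : (f + g) x - (f + g) y = (f x - f y) + (g x - g y) := by
      simp only [Pi.add_apply]; abel
    rw [this, add_mul]
    exact (norm_add_le _ _).trans (add_le_add (hK1 x y) (hK2 x y))
  · simp only [Pi.add_apply]
    exact (norm_add_le _ _).trans (add_le_add (hC1 x) (hC2 x))

lemma aux_bddLip_smul (c : 𝕜) {f : A → E} (hf : IsBddLip f) : IsBddLip (c • f) := by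
  obtain ⟨⟨K1, hK1⟩, ⟨C1, hC1⟩⟩ := hf
  refine ⟨⟨‖c‖ * K1, fun x y => ?_⟩, ⟨‖c‖ * C1, fun x => ?_⟩⟩
  · have : (c • f) x - (c • f) y = c • (f x - f y) := by
      simp only [Pi.smul_apply, smul_sub]
    rw [this, norm_smul, mul_assoc]
    exact mul_le_mul_of_nonneg_left (hK1 x y) (norm_nonneg c)
  · simp only [Pi.smul_apply, norm_smul]
    exact mul_le_mul_of_nonneg_left (hC1 x) (norm_nonneg c)

lemma aux_lipSet_nonempty {f : A → E} (hf : IsBddLip f) :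
    {K : ℝ | 0 ≤ K ∧ ∀ x y : A, ‖f x - f y‖ ≤ K * dist x y}.Nonempty := by
  obtain ⟨⟨K, hK⟩, -⟩ := hf
  exact ⟨max K 0, le_max_right _ _, fun x y =>
    (hK x y).trans (mul_le_mul_of_nonneg_right (le_max_left _ _) dist_nonneg)⟩

lemma aux_lipConst_nonneg {f : A → E} (hf : IsBddLip f) : 0 ≤ lipConst f :=
  le_csInf (aux_lipSet_nonempty hf) fun _ hb => hb.1

lemma aux_norm_sub_le {f : A → E} (hf : IsBddLip f) (a b : A) :
    ‖f a - f b‖ ≤ lipConst f * dist a b := by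
  rcases eq_or_ne a b with rfl | hab
  · simp
  · have dpos : 0 < dist a b := dist_pos.2 hab
    have h1 : ‖f a - f b‖ / dist a b ≤ lipConst f :=
      le_csInf (aux_lipSet_nonempty hf) fun K hK => (div_le_iff₀ dpos).2 (hK.2 a b)
    calc ‖f a - f b‖ = ‖f a - f b‖ / dist a b * dist a b := by
          field_simp
      _ ≤ lipConst f * dist a b := mul_le_mul_of_nonneg_right h1 dist_nonneg

lemma aux_sup_nonneg (f : A → E) : 0 ≤ ⨆ a, ‖f a‖ :=
  Real.iSup_nonneg fun a => norm_nonneg _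

lemma aux_le_sup {f : A → E} (hf : IsBddLip f) (a : A) : ‖f a‖ ≤ ⨆ x, ‖f x‖ := by
  obtain ⟨-, ⟨C, hC⟩⟩ := hf
  exact le_ciSup ⟨C, fun r ⟨x, hx⟩ => hx ▸ hC x⟩ a

lemma aux_lipNorm_nonneg {f : A → E} : 0 ≤ lipNorm f :=
  le_trans (aux_sup_nonneg f) (le_max_right _ _)

/-- Transfer of bounded-Lipschitz property and lip-norm through a generalized composition. -/
lemma aux_repTrans (f : A → E) (g : B → E) (σ : B → A) (U : B → E ≃ₗᵢ[𝕜] E)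
    (hσ : ∀ b b', dist b b' < 2 → dist (σ b) (σ b') ≤ dist b b')
    (hU : ∀ b b', dist b b' < 2 → U b = U b')
    (hrep : ∀ b, g b = U b (f (σ b)))
    (hf : IsBddLip f) : IsBddLip g ∧ lipNorm g ≤ lipNorm f := by
  have hL0 := aux_lipConst_nonneg hf
  have hM0 : 0 ≤ ⨆ a, ‖f a‖ := aux_sup_nonneg f
  have hgb : ∀ b, ‖g b‖ ≤ ⨆ a, ‖f a‖ := fun b => by
    rw [hrep b, LinearIsometryEquiv.norm_map]; exact aux_le_sup hf _
  have hKey : ∀ b b', ‖g b - g b'‖ ≤ max (lipConst f) (⨆ a, ‖f a‖) * dist b b' := by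
    intro b b'
    rcases lt_or_ge (dist b b') 2 with h2 | h2
    · rw [hrep b, hrep b', hU b b' h2, ← LinearIsometryEquiv.map_sub,
        LinearIsometryEquiv.norm_map]
      calc ‖f (σ b) - f (σ b')‖ ≤ lipConst f * dist (σ b) (σ b') := aux_norm_sub_le hf _ _
        _ ≤ lipConst f * dist b b' := mul_le_mul_of_nonneg_left (hσ b b' h2) hL0
        _ ≤ _ := mul_le_mul_of_nonneg_right (le_max_left _ _) dist_nonneg
    · calc ‖g b - g b'‖ ≤ ‖g b‖ + ‖g b'‖ := norm_sub_le _ _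
        _ ≤ (⨆ a, ‖f a‖) + (⨆ a, ‖f a‖) := add_le_add (hgb b) (hgb b')
        _ = (⨆ a, ‖f a‖) * 2 := by ring
        _ ≤ (⨆ a, ‖f a‖) * dist b b' := mul_le_mul_of_nonneg_left h2 hM0
        _ ≤ _ := mul_le_mul_of_nonneg_right (le_max_right _ _) dist_nonneg
  refine ⟨⟨⟨_, hKey⟩, ⟨_, hgb⟩⟩, ?_⟩
  have h1 : lipConst g ≤ max (lipConst f) (⨆ a, ‖f a‖) :=
    csInf_le ⟨0, fun b hb => hb.1⟩ ⟨le_max_of_le_left hL0, hKey⟩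
  have h2 : (⨆ b, ‖g b‖) ≤ max (lipConst f) (⨆ a, ‖f a‖) :=
    Real.iSup_le (fun b => (hgb b).trans (le_max_right _ _)) (le_max_of_le_right hM0)
  simp only [lipNorm]
  exact max_le h1 h2

lemma aux_lip_of_pres [CompactSpace A] (σ : B → A)
    (hσ : ∀ b b', dist b b' < 2 → dist (σ b) (σ b') ≤ dist b b') :
    ∃ K : ℝ, ∀ b b', dist (σ b) (σ b') ≤ K * dist b b' := by
  refine ⟨max 1 (Metric.diam (Set.univ : Set A)), fun b b' => ?_⟩
  rcases lt_or_ge (dist b b') 2 with h2 | h2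
  · calc dist (σ b) (σ b') ≤ dist b b' := hσ _ _ h2
      _ ≤ _ := le_mul_of_one_le_left dist_nonneg (le_max_left _ _)
  · calc dist (σ b) (σ b') ≤ Metric.diam (Set.univ : Set A) :=
        Metric.dist_le_diam_of_mem isCompact_univ.isBounded trivial trivial
      _ ≤ Metric.diam (Set.univ : Set A) * dist b b' :=
        le_mul_of_one_le_right Metric.diam_nonneg (by linarith)
      _ ≤ _ := mul_le_mul_of_nonneg_right (le_max_right _ _) dist_nonneg

lemma aux_lipNorm_subsingleton [Subsingleton E] (f : A → E) : lipNorm f = 0 := by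
  have h0 : ∀ (a b : E), a - b = 0 := fun a b => Subsingleton.elim _ _
  have h1 : lipConst f = 0 := by
    refine le_antisymm (csInf_le ⟨0, fun b hb => hb.1⟩ ⟨le_refl 0, fun x y => ?_⟩)
      (le_csInf ⟨0, le_refl 0, fun x y => ?_⟩ fun b hb => hb.1) <;>
      rw [h0 (f x) (f y), norm_zero, zero_mul]
  have h2 : (⨆ a, ‖f a‖) = 0 :=
    le_antisymm (Real.iSup_le (fun a => by rw [Subsingleton.elim (f a) 0, norm_zero]) le_rfl)
      (aux_sup_nonneg f)
  simp [lipNorm, h1, h2]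

/-- The peak function at `x` in direction `e`. -/
noncomputable def auxPk (𝕜 : Type*) [RCLike 𝕜] {A E : Type*} [MetricSpace A]
    [NormedAddCommGroup E] [NormedSpace 𝕜 E] (x : A) (e : E) : A → E :=
  fun z => ((max (1 - dist z x) 0 : ℝ) : 𝕜) • e

lemma auxPk_self (x : A) (e : E) : auxPk 𝕜 x e x = e := by
  simp [auxPk, max_eq_left (zero_le_one' ℝ)]

lemma auxPk_norm (x : A) (e : E) (z : A) :
    ‖auxPk 𝕜 x e z‖ = max (1 - dist z x) 0 * ‖e‖ := by
  rw [auxPk, norm_smul, RCLike.norm_ofReal, abs_of_nonneg (le_max_right _ _)]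

lemma auxPk_norm_eq_iff (x : A) (e : E) (he : ‖e‖ = 1) (z : A) :
    ‖auxPk 𝕜 x e z‖ = 1 ↔ z = x := by
  rw [auxPk_norm, he, mul_one]
  constructor
  · intro h
    have hd : dist z x ≤ 0 := by
      by_contra h'
      push_neg at h'
      have : max (1 - dist z x) 0 < 1 := max_lt (by linarith) one_pos
      linarith
    exact dist_le_zero.mp hd
  · intro h; subst h; simp

lemma aux_bddLip_pk (x : A) (e : E) : IsBddLip (auxPk 𝕜 x e : A → E) := by
  refine ⟨⟨‖e‖, fun z z' => ?_⟩, ⟨‖e‖, fun z => ?_⟩⟩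
  · have hsub : auxPk 𝕜 x e z - auxPk 𝕜 x e z'
        = ((max (1 - dist z x) 0 - max (1 - dist z' x) 0 : ℝ) : 𝕜) • e := by
      simp only [auxPk, RCLike.ofReal_sub, sub_smul]
    rw [hsub, norm_smul, RCLike.norm_ofReal]
    have h1 : |max (1 - dist z x) 0 - max (1 - dist z' x) 0| ≤ dist z z' := by
      refine (abs_max_sub_max_le_abs _ _ _).trans ?_
      have : (1 - dist z x) - (1 - dist z' x) = dist z' x - dist z x := by ring
      rw [this]
      exact (abs_dist_sub_le z' z x).trans (le_of_eq (dist_comm z' z))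
    calc |max (1 - dist z x) 0 - max (1 - dist z' x) 0| * ‖e‖
        ≤ dist z z' * ‖e‖ := mul_le_mul_of_nonneg_right h1 (norm_nonneg e)
      _ = ‖e‖ * dist z z' := by ring
  · rw [auxPk_norm]
    have : max (1 - dist z x) 0 ≤ 1 := max_le (by linarith [dist_nonneg (x := z) (y := x)]) zero_le_one
    calc max (1 - dist z x) 0 * ‖e‖ ≤ 1 * ‖e‖ :=
        mul_le_mul_of_nonneg_right this (norm_nonneg e)
      _ = ‖e‖ := one_mul _

/-- Composition of a dual functional with a surjective linear isometry has the same norm. -/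
lemma aux_comp_norm (u : StrongDual 𝕜 E) (hu : ‖u‖ = 1) (J : E ≃ₗᵢ[𝕜] E) :
    ‖u.comp J.toLinearIsometry.toContinuousLinearMap‖ = 1 := by
  refine le_antisymm ?_ ?_
  · refine ContinuousLinearMap.opNorm_le_bound _ zero_le_one fun z => ?_
    calc ‖u (J z)‖ ≤ ‖u‖ * ‖J z‖ := u.le_opNorm _
      _ = 1 * ‖z‖ := by rw [hu, J.norm_map]
  · rw [← hu]
    refine ContinuousLinearMap.opNorm_le_bound _ (norm_nonneg _) fun z => ?_
    have h1 : u z = u.comp J.toLinearIsometry.toContinuousLinearMap (J.symm z) := by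
      simp
    rw [h1]
    calc ‖u.comp J.toLinearIsometry.toContinuousLinearMap (J.symm z)‖
        ≤ ‖u.comp J.toLinearIsometry.toContinuousLinearMap‖ * ‖J.symm z‖ :=
          ContinuousLinearMap.le_opNorm _ _
      _ = ‖u.comp J.toLinearIsometry.toContinuousLinearMap‖ * ‖z‖ := by
          rw [J.symm.norm_map]

end AuxLemmas

/-- Theorem 2.7: every 2-local standard isometry on vector-valued Lipschitz spaces over
compact metric spaces is a generalized composition operator and a surjective linear
isometry. -/
theorem stmt10 {𝕜 X Y E : Type*} [RCLike 𝕜]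
    [MetricSpace X] [CompactSpace X] [MetricSpace Y] [CompactSpace Y]
    [NormedAddCommGroup E] [NormedSpace 𝕜 E] [CompleteSpace E]
    (hsm : IsSmooth 𝕜 E) (hrefl : IsReflexiveSp 𝕜 E) (h2ir : TwoIsoReflexive 𝕜 E)
    (Δ : (X → E) → (Y → E)) (hΔ : Is2LocalStdLipIso 𝕜 Δ) :
    (∃ (ψ : Y → X) (V : Y → (E ≃ₗᵢ[𝕜] E)),
      Function.Bijective ψ ∧
      (∃ K : ℝ, ∀ y y' : Y, dist (ψ y) (ψ y') ≤ K * dist y y') ∧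
      (∃ ψ' : X → Y, Function.LeftInverse ψ' ψ ∧ Function.RightInverse ψ' ψ ∧
        ∃ K : ℝ, ∀ x x' : X, dist (ψ' x) (ψ' x') ≤ K * dist x x') ∧
      (∀ e : E, Continuous fun y : Y => V y e) ∧
      ∀ (y : Y) (f : X → E), IsBddLip f → Δ f y = V y (f (ψ y))) ∧
    IsLipIso 𝕜 Δ := by
  classical
  rcases subsingleton_or_nontrivial E with hE | hE
  · -- trivial case: `E` has only one element
    obtain ⟨T, ⟨φ, ρ, J, hli, hri, hφ2, hρ2, hJc, hrepT⟩, hT0, -⟩ :=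
      hΔ 0 0 aux_bddLip_zero aux_bddLip_zero
    refine ⟨⟨φ, fun _ => LinearIsometryEquiv.refl 𝕜 E,
      ⟨hli.injective, hri.surjective⟩,
      aux_lip_of_pres φ (fun y y' h => (hφ2 y y' h).le),
      ⟨ρ, hli, hri, aux_lip_of_pres ρ (fun x x' h => (hρ2 x x' h).le)⟩,
      fun e => continuous_const,
      fun y f hf => Subsingleton.elim _ _⟩, ?_⟩
    refine ⟨?_, ?_, ?_, ?_, ?_⟩
    · intro f hf
      refine ⟨⟨0, fun x y => ?_⟩, ⟨0, fun x => ?_⟩⟩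
      · rw [Subsingleton.elim (Δ f x - Δ f y) (0 : E)]; simp
      · rw [Subsingleton.elim (Δ f x) (0 : E)]; simp
    · intro f g hf hg; funext y; exact Subsingleton.elim _ _
    · intro c f hf; funext y; exact Subsingleton.elim _ _
    · intro f hf; simp [aux_lipNorm_subsingleton]
    · intro g hg; exact ⟨0, aux_bddLip_zero, funext fun y => Subsingleton.elim _ _⟩
  · -- main case: `E` is nontrivial
    obtain ⟨e₀, he₀⟩ : ∃ e : E, ‖e‖ = 1 := by
      obtain ⟨c, hc⟩ := exists_ne (0 : E)
      refine ⟨((‖c‖⁻¹ : ℝ) : 𝕜) • c, ?_⟩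
      rw [norm_smul, RCLike.norm_ofReal, abs_of_nonneg (inv_nonneg.2 (norm_nonneg c)),
        inv_mul_cancel₀ (norm_ne_zero_iff.2 hc)]
    -- basic consequence of 2-locality for each pair of functions
    have key : ∀ f g : X → E, IsBddLip f → IsBddLip g →
        ∃ (φ : Y → X) (ρ : X → Y) (J : Y → E ≃ₗᵢ[𝕜] E),
          Function.LeftInverse ρ φ ∧ Function.RightInverse ρ φ ∧
          PreservesDistLT2 φ ∧ PreservesDistLT2 ρ ∧
          (∀ y y', dist y y' < 2 → J y = J y') ∧
          (∀ y, Δ f y = J y (f (φ y))) ∧ (∀ y, Δ g y = J y (g (φ y))) := by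
      intro f g hf hg
      obtain ⟨T, ⟨φ, ρ, J, h1, h2, h3, h4, h5, h6⟩, hTf, hTg⟩ := hΔ f g hf hg
      exact ⟨φ, ρ, J, h1, h2, h3, h4,
        fun y y' hd => h5 y y' (Relation.ReflTransGen.single hd),
        fun y => by rw [hTf]; exact h6 f hf y,
        fun y => by rw [hTg]; exact h6 g hg y⟩
    -- the point `y₀ x` where `Δ` of the peak function at `x` attains norm one
    have hpkex : ∀ x : X, ∃ y : Y, ‖Δ (auxPk 𝕜 x e₀) y‖ = 1 ∧
        ∀ y' : Y, ‖Δ (auxPk 𝕜 x e₀) y'‖ = 1 → y' = y := by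
      intro x
      obtain ⟨φ, ρ, J, hli, hri, hφ2, hρ2, hJc, h1, -⟩ :=
        key (auxPk 𝕜 x e₀) (auxPk 𝕜 x e₀) (aux_bddLip_pk x e₀) (aux_bddLip_pk x e₀)
      refine ⟨ρ x, ?_, ?_⟩
      · rw [h1 (ρ x), LinearIsometryEquiv.norm_map, hri x]
        exact (auxPk_norm_eq_iff x e₀ he₀ x).2 rfl
      · intro y' hy'
        rw [h1 y', LinearIsometryEquiv.norm_map, auxPk_norm_eq_iff x e₀ he₀] at hy'
        refine hli.injective ?_
        rw [hy', hri x]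
    choose y₀ hy₀ hy₀u using hpkex
    -- any standard form for a pair containing the peak at `x` sends `y₀ x` to `x`
    have hphi : ∀ (x : X) (e : E), ‖e‖ = 1 → ∀ (φ : Y → X) (J : Y → E ≃ₗᵢ[𝕜] E),
        (∀ y, Δ (auxPk 𝕜 x e) y = J y (auxPk 𝕜 x e (φ y))) →
        ∀ y : Y, ‖Δ (auxPk 𝕜 x e) y‖ = 1 → φ y = x := by
      intro x e he φ J hrep y hy
      rw [hrep y, LinearIsometryEquiv.norm_map, auxPk_norm_eq_iff x e he] at hy
      exact hy
    have hpknorm : ∀ (x : X) (e : E), ‖e‖ = 1 → ‖Δ (auxPk 𝕜 x e) (y₀ x)‖ = 1 := by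
      intro x e he
      obtain ⟨φ, ρ, J, hli, hri, hφ2, hρ2, hJc, h1, h2⟩ :=
        key (auxPk 𝕜 x e₀) (auxPk 𝕜 x e) (aux_bddLip_pk x e₀) (aux_bddLip_pk x e)
      have hx : φ (y₀ x) = x := hphi x e₀ he₀ φ J h1 (y₀ x) (hy₀ x)
      rw [h2 (y₀ x), hx, auxPk_self, LinearIsometryEquiv.norm_map, he]
    -- main pointwise standard form at `y₀ x`
    have hA : ∀ (x : X) (e : E), ‖e‖ = 1 → ∀ (f : X → E), IsBddLip f →
        ∃ J : E ≃ₗᵢ[𝕜] E, Δ f (y₀ x) = J (f x) ∧ Δ (auxPk 𝕜 x e) (y₀ x) = J e := by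
      intro x e he f hf
      obtain ⟨φ, ρ, J, hli, hri, hφ2, hρ2, hJc, h1, h2⟩ :=
        key f (auxPk 𝕜 x e) hf (aux_bddLip_pk x e)
      have hx : φ (y₀ x) = x := hphi x e he φ J h2 (y₀ x) (hpknorm x e he)
      exact ⟨J (y₀ x), by rw [h1 (y₀ x), hx], by rw [h2 (y₀ x), hx, auxPk_self]⟩
    -- `y₀` preserves distances below `2` in both directions and is injective
    have hB2 : ∀ x x' : X,
        (dist x x' < 2 → dist (y₀ x) (y₀ x') = dist x x') ∧
        (dist (y₀ x) (y₀ x') < 2 → dist (y₀ x) (y₀ x') = dist x x') ∧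
        (y₀ x = y₀ x' → x = x') := by
      intro x x'
      obtain ⟨φ, ρ, J, hli, hri, hφ2, hρ2, hJc, h1, h2⟩ :=
        key (auxPk 𝕜 x e₀) (auxPk 𝕜 x' e₀) (aux_bddLip_pk x e₀) (aux_bddLip_pk x' e₀)
      have hx : φ (y₀ x) = x := hphi x e₀ he₀ φ J h1 (y₀ x) (hy₀ x)
      have hx' : φ (y₀ x') = x' := hphi x' e₀ he₀ φ J h2 (y₀ x') (hy₀ x')
      refine ⟨?_, ?_, ?_⟩
      · intro hd
        have h3 := hli (y₀ x); rw [hx] at h3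
        have h4 := hli (y₀ x'); rw [hx'] at h4
        have h5 := hρ2 x x' hd
        rw [h3, h4] at h5
        exact h5
      · intro hd
        have h5 := hφ2 (y₀ x) (y₀ x') hd
        rw [hx, hx'] at h5
        exact h5.symm
      · intro h
        rw [← hx, ← hx', h]
    have hinj : Function.Injective y₀ := fun x x' h => (hB2 x x').2.2 h
    have hcont : Continuous y₀ := by
      rw [Metric.continuous_iff]
      intro x ε hε
      refine ⟨min ε 2, lt_min hε two_pos, fun a ha => ?_⟩
      have h2 : dist a x < 2 := lt_of_lt_of_le ha (min_le_right _ _)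
      rw [(hB2 a x).1 h2]
      exact lt_of_lt_of_le ha (min_le_left _ _)
    -- surjectivity of `y₀` via a packing argument
    have hsur : Function.Surjective y₀ := by
      intro ys
      by_contra hns
      push_neg at hns
      obtain ⟨φP, ρP, JP, hliP, hriP, hφ2P, hρ2P, -, -, -⟩ :=
        key 0 0 aux_bddLip_zero aux_bddLip_zero
      have hRcomp : IsCompact (Set.range y₀) := isCompact_range hcont
      have hRne : (Set.range y₀).Nonempty := ⟨y₀ (φP ys), Set.mem_range_self _⟩
      obtain ⟨z, hzR, hzmin⟩ := hRcomp.exists_isMinOn hRne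
        ((continuous_const.dist continuous_id).continuousOn :
          ContinuousOn (fun r : Y => dist ys r) _)
      have hδpos : 0 < dist ys z := by
        rw [dist_pos]
        rintro rfl
        obtain ⟨x, hx⟩ := hzR
        exact hns x hx
      set ε := min (dist ys z) 1 with hεdef
      have hεpos : 0 < ε := lt_min hδpos one_pos
      have hε1 : ε ≤ 1 := min_le_right _ _
      have hdistR : ∀ r ∈ Set.range y₀, ε ≤ dist ys r := fun r hr =>
        le_trans (min_le_left _ _) (hzmin hr)
      obtain ⟨t, -, htfin, htcov⟩ := finite_cover_balls_of_compact
        (isCompact_univ : IsCompact (Set.univ : Set Y)) (by positivity : (0:ℝ) < ε/2)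
      have hbound : ∀ S : Finset Y, (∀ a ∈ S, ∀ b ∈ S, a ≠ b → ε ≤ dist a b) →
          S.card ≤ htfin.toFinset.card := by
        intro S hS
        have hc : ∀ a : Y, ∃ cc, cc ∈ htfin.toFinset ∧ a ∈ Metric.ball cc (ε/2) := by
          intro a
          have h0 := htcov (Set.mem_univ a)
          simp only [Set.mem_iUnion] at h0
          obtain ⟨cc, hct, hac⟩ := h0
          exact ⟨cc, htfin.mem_toFinset.2 hct, hac⟩
        choose c hct hcball using hc
        refine Finset.card_le_card_of_injOn c (fun a _ => hct a) ?_
        intro a ha b hb hab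
        by_contra hne
        have h1 : dist a b < ε := by
          have ha' : dist a (c a) < ε/2 := Metric.mem_ball.1 (hcball a)
          have hb' : dist b (c b) < ε/2 := Metric.mem_ball.1 (hcball b)
          calc dist a b ≤ dist a (c a) + dist (c a) b := dist_triangle _ _ _
            _ < ε/2 + ε/2 := add_lt_add ha' (by rw [hab, dist_comm]; exact hb')
            _ = ε := by ring
        exact absurd h1 (not_lt.2 (hS a ha b hb hne))
      have hmapsep : ∀ a b : Y, ε ≤ dist a b →
          ε ≤ dist (y₀ (φP a)) (y₀ (φP b)) := by
        intro a b hab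
        by_contra hlt
        push_neg at hlt
        have h2 : dist (y₀ (φP a)) (y₀ (φP b)) < 2 :=
          lt_of_lt_of_le hlt (hε1.trans one_le_two)
        have h3 := (hB2 (φP a) (φP b)).2.1 h2
        have h4 : dist (φP a) (φP b) < 2 := by rw [← h3]; exact h2
        have h5 := hρ2P (φP a) (φP b) h4
        rw [hliP a, hliP b] at h5
        rw [h3, ← h5] at hlt
        exact absurd hab (not_le.2 hlt)
      have hginj : Function.Injective (fun y => y₀ (φP y)) := fun a b h =>
        hliP.injective (hinj h)
      have grow : ∀ n : ℕ, ∃ S : Finset Y, (↑S ⊆ Set.range y₀) ∧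
          (∀ a ∈ S, ∀ b ∈ S, a ≠ b → ε ≤ dist a b) ∧ n ≤ S.card := by
        intro n
        induction n with
        | zero => exact ⟨∅, by simp, by simp, by simp⟩
        | succ n ih =>
          obtain ⟨S, hSR, hSsep, hScard⟩ := ih
          have hysS : ys ∉ S := by
            intro h
            obtain ⟨x, hx⟩ := hSR (Finset.mem_coe.2 h)
            exact hns x hx
          have hsep' : ∀ a ∈ insert ys S, ∀ b ∈ insert ys S, a ≠ b → ε ≤ dist a b := by
            intro a ha b hb hne
            rcases Finset.mem_insert.1 ha with rfl | ha' <;>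
              rcases Finset.mem_insert.1 hb with rfl | hb'
            · exact absurd rfl hne
            · exact hdistR b (hSR (Finset.mem_coe.2 hb'))
            · rw [dist_comm]; exact hdistR a (hSR (Finset.mem_coe.2 ha'))
            · exact hSsep a ha' b hb' hne
          refine ⟨(insert ys S).image (fun y => y₀ (φP y)), ?_, ?_, ?_⟩
          · intro yy hyy
            simp only [Finset.coe_image, Set.mem_image] at hyy
            obtain ⟨a, -, rfl⟩ := hyy
            exact Set.mem_range_self _
          · intro a ha b hb hne
            simp only [Finset.mem_image] at ha hb
            obtain ⟨a', ha', rfl⟩ := ha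
            obtain ⟨b', hb', rfl⟩ := hb
            have hne' : a' ≠ b' := fun h => hne (by rw [h])
            exact hmapsep a' b' (hsep' a' ha' b' hb' hne')
          · rw [Finset.card_image_of_injective _ hginj,
              Finset.card_insert_of_notMem hysS]
            omega
      obtain ⟨S, -, hSsep, hScard⟩ := grow (htfin.toFinset.card + 1)
      have := hbound S hSsep
      omega
    -- the family of isometries `V`
    have hVex : ∀ y : Y, ∃ W : E ≃ₗᵢ[𝕜] E, ∀ e : E, W e = Δ (fun _ => e) y := by
      intro y
      set Dc : E → E := fun e => Δ (fun _ => e) y with hDc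
      have hloc : ∀ a b : E, ∃ T : E ≃ₗᵢ[𝕜] E, Dc a = T a ∧ Dc b = T b := by
        intro a b
        obtain ⟨φ, ρ, J, -, -, -, -, -, h1, h2⟩ :=
          key (fun _ => a) (fun _ => b) (aux_bddLip_const a) (aux_bddLip_const b)
        exact ⟨J y, h1 y, h2 y⟩
      obtain ⟨hadd, hsmul, hsurj⟩ := h2ir Dc hloc
      have hnorm : ∀ a : E, ‖Dc a‖ = ‖a‖ := by
        intro a
        obtain ⟨T, hT, -⟩ := hloc a a
        rw [hT, T.norm_map]
      have hinjD : Function.Injective Dc := by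
        intro a b hab
        have h1 : Dc (a - b) = Dc a - Dc b := by
          have h0 := hadd (a - b) b
          rw [sub_add_cancel] at h0
          rw [h0]; abel
        have h2 : ‖a - b‖ = 0 := by
          rw [← hnorm (a - b), h1, hab, sub_self, norm_zero]
        rw [← sub_eq_zero]
        exact norm_eq_zero.1 h2
      exact ⟨{ LinearEquiv.ofBijective
          { toFun := Dc, map_add' := hadd,
            map_smul' := fun c a => by simp [hsmul c a] } ⟨hinjD, hsurj⟩ with
          norm_map' := hnorm }, fun e => rfl⟩
    choose V hV using hVex
    have hVconst : ∀ y y' : Y, dist y y' < 2 → V y = V y' := by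
      intro y y' hd
      refine LinearIsometryEquiv.ext fun e => ?_
      obtain ⟨φ, ρ, J, -, -, -, -, hJc, h1, -⟩ :=
        key (fun _ => e) (fun _ => e) (aux_bddLip_const e) (aux_bddLip_const e)
      rw [hV y e, hV y' e, h1 y, h1 y', hJc y y' hd]
    -- the representation at points `y₀ x`
    have rep : ∀ (x : X) (f : X → E), IsBddLip f → Δ f (y₀ x) = V (y₀ x) (f x) := by
      intro x f hf
      by_contra hne
      have hz0 : Δ f (y₀ x) - V (y₀ x) (f x) ≠ 0 := sub_ne_zero.2 hne
      set c : E := (V (y₀ x)).symm (Δ f (y₀ x) - V (y₀ x) (f x)) with hcdef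
      have hc0 : c ≠ 0 := by
        intro h
        apply hz0
        have h1 := congrArg (V (y₀ x)) h
        rwa [hcdef, LinearIsometryEquiv.apply_symm_apply, map_zero] at h1
      set e : E := ((‖c‖⁻¹ : ℝ) : 𝕜) • c with hedef
      have he : ‖e‖ = 1 := by
        rw [hedef, norm_smul, RCLike.norm_ofReal,
          abs_of_nonneg (inv_nonneg.2 (norm_nonneg c)),
          inv_mul_cancel₀ (norm_ne_zero_iff.2 hc0)]
      have he0 : e ≠ 0 := by
        intro h; rw [h, norm_zero] at he; exact one_ne_zero he.symm
      obtain ⟨u, hu1, hue⟩ := exists_dual_vector 𝕜 e (norm_ne_zero_iff.2 he0)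
      have hue1 : u e = 1 := by rw [hue, he]; exact RCLike.ofReal_one
      have huc : u c = (‖c‖ : 𝕜) := by
        have h1 : ((‖c‖⁻¹ : ℝ) : 𝕜) * u c = 1 := by
          rw [← smul_eq_mul, ← map_smul, ← hedef, hue1]
        have h2 : ((‖c‖⁻¹ : ℝ) : 𝕜) ≠ 0 := by
          rw [ne_eq, RCLike.ofReal_eq_zero]
          exact inv_ne_zero (norm_ne_zero_iff.2 hc0)
        have h3 : ((‖c‖⁻¹ : ℝ) : 𝕜) * (‖c‖ : 𝕜) = 1 := by
          rw [← RCLike.ofReal_mul, inv_mul_cancel₀ (norm_ne_zero_iff.2 hc0),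
            RCLike.ofReal_one]
        exact mul_left_cancel₀ h2 (by rw [h1, h3])
      obtain ⟨J₁, hJ₁f, hJ₁e⟩ := hA x e he f hf
      have hwnorm : ‖Δ (auxPk 𝕜 x e) (y₀ x)‖ = 1 := hpknorm x e he
      have hv₁norm : ‖u.comp J₁.symm.toLinearIsometry.toContinuousLinearMap‖ = 1 :=
        aux_comp_norm u hu1 J₁.symm
      have hv₁w : u.comp J₁.symm.toLinearIsometry.toContinuousLinearMap
          (Δ (auxPk 𝕜 x e) (y₀ x)) = 1 := by
        show u (J₁.symm (Δ (auxPk 𝕜 x e) (y₀ x))) = 1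
        rw [hJ₁e, LinearIsometryEquiv.symm_apply_apply, hue1]
      have huniq := hsm (Δ (auxPk 𝕜 x e) (y₀ x)) hwnorm
      have hVc : ∀ c' : E, u.comp J₁.symm.toLinearIsometry.toContinuousLinearMap
          (V (y₀ x) c') = u c' := by
        intro c'
        obtain ⟨J₂, hJ₂f, hJ₂e⟩ := hA x e he (fun _ => c') (aux_bddLip_const c')
        have hv₂norm : ‖u.comp J₂.symm.toLinearIsometry.toContinuousLinearMap‖ = 1 :=
          aux_comp_norm u hu1 J₂.symm
        have hv₂w : u.comp J₂.symm.toLinearIsometry.toContinuousLinearMap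
            (Δ (auxPk 𝕜 x e) (y₀ x)) = 1 := by
          show u (J₂.symm (Δ (auxPk 𝕜 x e) (y₀ x))) = 1
          rw [hJ₂e, LinearIsometryEquiv.symm_apply_apply, hue1]
        have heq : u.comp J₂.symm.toLinearIsometry.toContinuousLinearMap
            = u.comp J₁.symm.toLinearIsometry.toContinuousLinearMap :=
          huniq.unique ⟨hv₂norm, hv₂w⟩ ⟨hv₁norm, hv₁w⟩
        have hVyc : V (y₀ x) c' = J₂ c' := by rw [hV (y₀ x) c', hJ₂f]
        rw [← heq, hVyc]
        show u (J₂.symm (J₂ c')) = u c'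
        rw [LinearIsometryEquiv.symm_apply_apply]
      have h1 : u.comp J₁.symm.toLinearIsometry.toContinuousLinearMap (Δ f (y₀ x))
          = u (f x) := by
        rw [hJ₁f]
        show u (J₁.symm (J₁ (f x))) = u (f x)
        rw [LinearIsometryEquiv.symm_apply_apply]
      have h2 : u.comp J₁.symm.toLinearIsometry.toContinuousLinearMap
          (Δ f (y₀ x) - V (y₀ x) (f x)) = 0 := by
        rw [map_sub, h1, hVc (f x), sub_self]
      have h3 : u.comp J₁.symm.toLinearIsometry.toContinuousLinearMap
          (Δ f (y₀ x) - V (y₀ x) (f x)) = (‖c‖ : 𝕜) := by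
        have hzz : Δ f (y₀ x) - V (y₀ x) (f x) = V (y₀ x) c := by
          rw [hcdef, LinearIsometryEquiv.apply_symm_apply]
        rw [hzz, hVc, huc]
      rw [h2] at h3
      have h4 : ‖c‖ = 0 := by rwa [eq_comm, RCLike.ofReal_eq_zero] at h3
      exact hc0 (norm_eq_zero.1 h4)
    -- assemble the final data
    have hbij : Function.Bijective y₀ := ⟨hinj, hsur⟩
    set ψeq := Equiv.ofBijective y₀ hbij with hψeqdef
    set ψ : Y → X := fun y => ψeq.symm y with hψdef
    have hyψ : ∀ y : Y, y₀ (ψ y) = y := fun y => ψeq.apply_symm_apply y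
    have hψy : ∀ x : X, ψ (y₀ x) = x := fun x => ψeq.symm_apply_apply x
    have repψ : ∀ (y : Y) (f : X → E), IsBddLip f → Δ f y = V y (f (ψ y)) := by
      intro y f hf
      have h := rep (ψ y) f hf
      rwa [hyψ y] at h
    have hψpres : ∀ y y' : Y, dist y y' < 2 → dist (ψ y) (ψ y') = dist y y' := by
      intro y y' hd
      rcases lt_or_ge (dist (ψ y) (ψ y')) 2 with h2 | h2
      · have h := (hB2 (ψ y) (ψ y')).1 h2
        rw [hyψ y, hyψ y'] at h
        exact h.symm
      · exfalso
        have h3 : dist (y₀ (ψ y)) (y₀ (ψ y')) < 2 := by rw [hyψ y, hyψ y']; exact hd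
        have h4 := (hB2 (ψ y) (ψ y')).2.1 h3
        rw [hyψ y, hyψ y'] at h4
        rw [h4] at hd
        exact absurd h2 (not_le.2 hd)
    have hUbwd : ∀ x x' : X, dist x x' < 2 →
        (fun x => (V (y₀ x)).symm) x = (fun x => (V (y₀ x)).symm) x' := by
      intro x x' h
      have h2 : dist (y₀ x) (y₀ x') < 2 := by rw [(hB2 x x').1 h]; exact h
      simp only
      rw [hVconst (y₀ x) (y₀ x') h2]
    refine ⟨⟨ψ, V,
      Function.bijective_iff_has_inverse.2 ⟨y₀, hyψ, hψy⟩,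
      aux_lip_of_pres ψ (fun y y' h => (hψpres y y' h).le),
      ⟨y₀, hyψ, hψy, aux_lip_of_pres y₀ (fun x x' h => ((hB2 x x').1 h).le)⟩,
      ?_, fun y f hf => repψ y f hf⟩, ?_⟩
    · intro e
      rw [Metric.continuous_iff]
      intro y ε hε
      refine ⟨2, two_pos, fun a ha => ?_⟩
      rw [hVconst a y ha, dist_self]
      exact hε
    · refine ⟨?_, ?_, ?_, ?_, ?_⟩
      · intro f hf
        exact (aux_repTrans f (Δ f) ψ V (fun y y' h => (hψpres y y' h).le) hVconst
          (fun y => repψ y f hf) hf).1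
      · intro f g hf hg
        funext y
        rw [Pi.add_apply, repψ y (f + g) (aux_bddLip_add hf hg), repψ y f hf,
          repψ y g hg, Pi.add_apply, map_add]
      · intro c f hf
        funext y
        rw [Pi.smul_apply, repψ y (c • f) (aux_bddLip_smul c hf), repψ y f hf,
          Pi.smul_apply, map_smul]
      · intro f hf
        have hfwd := aux_repTrans f (Δ f) ψ V (fun y y' h => (hψpres y y' h).le) hVconst
          (fun y => repψ y f hf) hf
        have hbwd := aux_repTrans (Δ f) f y₀ (fun x => (V (y₀ x)).symm)
          (fun x x' h => ((hB2 x x').1 h).le) hUbwd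
          (fun x => by rw [rep x f hf, LinearIsometryEquiv.symm_apply_apply])
          hfwd.1
        exact le_antisymm hfwd.2 hbwd.2
      · intro g hg
        have hFbdd : IsBddLip (fun x => (V (y₀ x)).symm (g (y₀ x))) :=
          (aux_repTrans g (fun x => (V (y₀ x)).symm (g (y₀ x))) y₀
            (fun x => (V (y₀ x)).symm)
            (fun x x' h => ((hB2 x x').1 h).le) hUbwd
            (fun x => rfl) hg).1
        refine ⟨fun x => (V (y₀ x)).symm (g (y₀ x)), hFbdd, funext fun y => ?_⟩
        rw [repψ y _ hFbdd]
        show V y ((V (y₀ (ψ y))).symm (g (y₀ (ψ y)))) = g y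
        rw [hyψ y, LinearIsometryEquiv.apply_symm_apply]
end

section
/- Let X and Y be compact pathwise connected metric spaces, let E be a smooth reflexive Banach space, and let Δ : Lip(X,E) → Lip(Y,E) be a 2-local isometry. Suppose y ∈ Y and x ∈ X are such that there exist norm-one functionals u*, v* ∈ S_{E*} with v*(Δ(h)(y)) = u*(h(x)) for every h ∈ Lip(X,E). Then the map V : E → E defined by V(e) = Δ(f)(y), where f is any function in Lip(X,E) with f(x) = e, is well defined and is a 2-local isometry on E; that is, for all e_1, e_2 ∈ E there exists a surjective linear isometry W ∈ Iso(E) with V(e_1) = W(e_1) and V(e_2) = W(e_2). In particular, if E is 2-iso-reflexive, then V is a surjective linear isometry of E. -/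
open Function Metric Set
open scoped NNReal

noncomputable section AuxProof

variable {𝕜 : Type*} [RCLike 𝕜]

section BasicX

variable {X : Type*} [MetricSpace X] {E : Type*} [NormedAddCommGroup E] [NormedSpace 𝕜 E]

namespace AuxL

/-- constant function -/
def constF (X : Type*) {E : Type*} (e : E) : X → E := fun _ => e

/-- bump function of radius `m` centered at `x` with value `e`. -/
def bumpF (𝕜 : Type*) [RCLike 𝕜] {X E : Type*} [MetricSpace X] [NormedAddCommGroup E]
    [NormedSpace 𝕜 E] (m : ℝ) (x : X) (e : E) : X → E :=
  fun z => ((max (1 - dist z x / m) 0 : ℝ) : 𝕜) • e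

lemma bumpF_apply (m : ℝ) (x : X) (e : E) (z : X) :
    bumpF 𝕜 m x e z = ((max (1 - dist z x / m) 0 : ℝ) : 𝕜) • e := rfl

lemma bumpF_self (m : ℝ) (x : X) (e : E) : bumpF 𝕜 m x e x = e := by
  simp [bumpF]

lemma norm_bumpF_apply (m : ℝ) (x : X) (e : E) (z : X) :
    ‖bumpF 𝕜 m x e z‖ = max (1 - dist z x / m) 0 * ‖e‖ := by
  rw [bumpF_apply, norm_smul, RCLike.norm_ofReal, abs_of_nonneg (le_max_right _ _)]

lemma bumpF_far {m : ℝ} (hm : 0 < m) {x z : X} (h : m ≤ dist z x) (e : E) :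
    bumpF 𝕜 m x e z = 0 := by
  have : (1 : ℝ) - dist z x / m ≤ 0 := by
    have : (1:ℝ) ≤ dist z x / m := (one_le_div hm).2 h
    linarith
  rw [bumpF_apply, max_eq_right this]
  simp

lemma bumpF_coeff_lip {m : ℝ} (hm : 0 < m) (x z z' : X) :
    |max (1 - dist z x / m) 0 - max (1 - dist z' x / m) 0| ≤ dist z z' / m := by
  have h1 : |max (1 - dist z x / m) 0 - max (1 - dist z' x / m) 0|
      ≤ |(1 - dist z x / m) - (1 - dist z' x / m)| := abs_max_sub_max_le_abs _ _ _
  have h2 : (1 - dist z x / m) - (1 - dist z' x / m) = (dist z' x - dist z x) / m := by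
    ring
  rw [h2] at h1
  refine h1.trans ?_
  rw [abs_div, abs_of_pos hm, div_le_div_iff_of_pos_right hm]
  rw [abs_sub_comm]
  exact abs_dist_sub_le z z' x

lemma bumpF_lipBound {m : ℝ} (hm : 0 < m) (x : X) (e : E) (z z' : X) :
    ‖bumpF 𝕜 m x e z - bumpF 𝕜 m x e z'‖ ≤ (‖e‖ / m) * dist z z' := by
  have : bumpF 𝕜 m x e z - bumpF 𝕜 m x e z'
      = (((max (1 - dist z x / m) 0 - max (1 - dist z' x / m) 0 : ℝ)) : 𝕜) • e := by
    rw [bumpF_apply, bumpF_apply, ← sub_smul]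
    push_cast
    ring_nf
  rw [this, norm_smul, RCLike.norm_ofReal]
  calc |max (1 - dist z x / m) 0 - max (1 - dist z' x / m) 0| * ‖e‖
      ≤ (dist z z' / m) * ‖e‖ := by
        exact mul_le_mul_of_nonneg_right (bumpF_coeff_lip hm x z z') (norm_nonneg _)
    _ = (‖e‖ / m) * dist z z' := by ring

lemma isBddLip_bumpF {m : ℝ} (hm : 0 < m) (x : X) (e : E) : IsBddLip (bumpF 𝕜 m x e) :=
  ⟨⟨‖e‖ / m, fun z z' => bumpF_lipBound hm x e z z'⟩,
   ⟨‖e‖, fun z => by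
      rw [norm_bumpF_apply]
      have h1 : max (1 - dist z x / m) 0 ≤ 1 := by
        apply max_le _ zero_le_one
        have : 0 ≤ dist z x / m := div_nonneg dist_nonneg hm.le
        linarith
      calc max (1 - dist z x / m) 0 * ‖e‖ ≤ 1 * ‖e‖ :=
            mul_le_mul_of_nonneg_right h1 (norm_nonneg _)
        _ = ‖e‖ := one_mul _⟩⟩

lemma bumpF_add (m : ℝ) (x : X) (e e' : E) :
    bumpF 𝕜 m x (e + e') = bumpF 𝕜 m x e + bumpF 𝕜 m x e' := by
  funext z
  rw [Pi.add_apply, bumpF_apply, bumpF_apply, bumpF_apply, smul_add]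

lemma bumpF_smul (m : ℝ) (x : X) (c : 𝕜) (e : E) :
    bumpF 𝕜 m x (c • e) = c • bumpF 𝕜 m x e := by
  funext z
  rw [Pi.smul_apply, bumpF_apply, bumpF_apply, smul_comm]

lemma isBddLip_const (e : E) : IsBddLip (constF X e) :=
  ⟨⟨0, fun z z' => by simp [constF]⟩, ⟨‖e‖, fun z => le_refl _⟩⟩

lemma isBddLip_zero : IsBddLip (0 : X → E) :=
  ⟨⟨0, fun z z' => by simp⟩, ⟨0, fun z => by simp⟩⟩

lemma bddLip_add {f g : X → E} (hf : IsBddLip f) (hg : IsBddLip g) : IsBddLip (f + g) := by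
  obtain ⟨⟨K, hK⟩, ⟨C, hC⟩⟩ := hf
  obtain ⟨⟨K', hK'⟩, ⟨C', hC'⟩⟩ := hg
  refine ⟨⟨K + K', fun z z' => ?_⟩, ⟨C + C', fun z => ?_⟩⟩
  · have : (f + g) z - (f + g) z' = (f z - f z') + (g z - g z') := by
      simp [Pi.add_apply]; abel
    rw [this, add_mul]
    exact (norm_add_le _ _).trans (add_le_add (hK z z') (hK' z z'))
  · exact (norm_add_le _ _).trans (add_le_add (hC z) (hC' z))

lemma bddLip_neg {f : X → E} (hf : IsBddLip f) : IsBddLip (-f) := by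
  obtain ⟨⟨K, hK⟩, ⟨C, hC⟩⟩ := hf
  refine ⟨⟨K, fun z z' => ?_⟩, ⟨C, fun z => ?_⟩⟩
  · have : (-f) z - (-f) z' = -(f z - f z') := by simp; abel
    rw [this, norm_neg]; exact hK z z'
  · simpa using hC z

lemma bddLip_sub {f g : X → E} (hf : IsBddLip f) (hg : IsBddLip g) : IsBddLip (f - g) := by
  have : f - g = f + -g := by funext z; simp [sub_eq_add_neg]
  rw [this]; exact bddLip_add hf (bddLip_neg hg)

lemma bddLip_smul {f : X → E} (c : 𝕜) (hf : IsBddLip f) : IsBddLip (c • f) := by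
  obtain ⟨⟨K, hK⟩, ⟨C, hC⟩⟩ := hf
  refine ⟨⟨‖c‖ * K, fun z z' => ?_⟩, ⟨‖c‖ * C, fun z => ?_⟩⟩
  · have : (c • f) z - (c • f) z' = c • (f z - f z') := by simp [smul_sub]
    rw [this, norm_smul, mul_assoc]
    exact mul_le_mul_of_nonneg_left (hK z z') (norm_nonneg c)
  · have : (c • f) z = c • f z := rfl
    rw [this, norm_smul]
    exact mul_le_mul_of_nonneg_left (hC z) (norm_nonneg c)

/-- the norm bound defining `lipConst` is valid. -/
lemma lipConst_spec {f : X → E} (hf : IsBddLip f) (z z' : X) :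
    ‖f z - f z'‖ ≤ lipConst f * dist z z' := by
  obtain ⟨⟨K, hK⟩, -⟩ := hf
  have hne : {K : ℝ | 0 ≤ K ∧ ∀ x y : X, ‖f x - f y‖ ≤ K * dist x y}.Nonempty := by
    refine ⟨max K 0, le_max_right _ _, fun a b => ?_⟩
    exact (hK a b).trans (mul_le_mul_of_nonneg_right (le_max_left _ _) dist_nonneg)
  rcases eq_or_lt_of_le (dist_nonneg : (0:ℝ) ≤ dist z z') with h0 | h0
  · have hzz : z = z' := by rwa [eq_comm, dist_eq_zero] at h0
    subst hzz
    have h1 : ‖f z - f z‖ = 0 := by simp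
    rw [h1, ← h0, mul_zero]
  · rw [← div_le_iff₀ h0]
    apply le_csInf hne
    intro b hb
    rw [div_le_iff₀ h0]
    exact hb.2 z z'

lemma lipConst_nonneg (f : X → E) : 0 ≤ lipConst f := by
  apply Real.sInf_nonneg
  intro b hb
  exact hb.1

lemma lipConst_le {f : X → E} {K : ℝ} (h0 : 0 ≤ K)
    (hK : ∀ z z' : X, ‖f z - f z'‖ ≤ K * dist z z') : lipConst f ≤ K :=
  csInf_le ⟨0, fun b hb => hb.1⟩ ⟨h0, hK⟩

lemma bddAbove_range_norm {f : X → E} (hf : IsBddLip f) :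
    BddAbove (Set.range fun z => ‖f z‖) := by
  obtain ⟨-, ⟨C, hC⟩⟩ := hf
  exact ⟨C, by rintro r ⟨z, rfl⟩; exact hC z⟩

lemma norm_le_lipNorm {f : X → E} (hf : IsBddLip f) (z : X) : ‖f z‖ ≤ lipNorm f := by
  refine le_trans ?_ (le_max_right _ _)
  exact le_ciSup (bddAbove_range_norm hf) z

lemma lipNorm_nonneg [Nonempty X] (f : X → E) : 0 ≤ lipNorm f :=
  le_trans (lipConst_nonneg f) (le_max_left _ _)

lemma lipNorm_le [Nonempty X] {f : X → E} {K : ℝ} (h0 : 0 ≤ K)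
    (hL : ∀ z z' : X, ‖f z - f z'‖ ≤ K * dist z z') (hC : ∀ z : X, ‖f z‖ ≤ K) :
    lipNorm f ≤ K :=
  max_le (lipConst_le h0 hL) (ciSup_le hC)

lemma eq_zero_of_lipNorm_eq_zero {f : X → E} (hf : IsBddLip f) (h : lipNorm f = 0) : f = 0 := by
  funext z
  have := norm_le_lipNorm hf z
  rw [h] at this
  simpa using norm_le_zero_iff.1 this

lemma lipNorm_const [Nonempty X] (e : E) : lipNorm (constF X e) = ‖e‖ := by
  apply le_antisymm
  · exact lipNorm_le (norm_nonneg e) (fun z z' => by simp [constF]; positivity)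
      (fun z => le_refl _)
  · exact norm_le_lipNorm (isBddLip_const e) (Classical.arbitrary X)

lemma lipNorm_bumpF {m : ℝ} (hm : 1 ≤ m) (x : X) (e : E) :
    lipNorm (bumpF 𝕜 m x e) = ‖e‖ := by
  have hm0 : (0:ℝ) < m := lt_of_lt_of_le one_pos hm
  have : Nonempty X := ⟨x⟩
  apply le_antisymm
  · refine lipNorm_le (norm_nonneg e) (fun z z' => ?_) (fun z => ?_)
    · refine (bumpF_lipBound hm0 x e z z').trans ?_
      apply mul_le_mul_of_nonneg_right _ dist_nonneg
      exact div_le_self (norm_nonneg e) hm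
    · rw [norm_bumpF_apply]
      have h1 : max (1 - dist z x / m) 0 ≤ 1 := by
        apply max_le _ zero_le_one
        have : 0 ≤ dist z x / m := div_nonneg dist_nonneg hm0.le
        linarith
      calc max (1 - dist z x / m) 0 * ‖e‖ ≤ 1 * ‖e‖ :=
            mul_le_mul_of_nonneg_right h1 (norm_nonneg _)
        _ = ‖e‖ := one_mul _
  · have := norm_le_lipNorm (f := bumpF 𝕜 m x e) (isBddLip_bumpF hm0 x e) x
    rwa [bumpF_self] at this

/-- A norm-one-bounded linear functional on the bounded Lipschitz functions. -/
structure IsNF (Λ : (X → E) → 𝕜) : Prop where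
  map_add : ∀ f g, IsBddLip f → IsBddLip g → Λ (f + g) = Λ f + Λ g
  map_smul : ∀ (c : 𝕜) (f), IsBddLip f → Λ (c • f) = c • Λ f
  bound : ∀ f, IsBddLip f → ‖Λ f‖ ≤ lipNorm f

lemma IsNF.map_zero {Λ : (X → E) → 𝕜} (hΛ : IsNF Λ) : Λ 0 = 0 := by
  have h := hΛ.map_smul 0 0 isBddLip_zero
  simpa using h

lemma IsNF.map_sub {Λ : (X → E) → 𝕜} (hΛ : IsNF Λ) {f g : X → E}
    (hf : IsBddLip f) (hg : IsBddLip g) : Λ (f - g) = Λ f - Λ g := by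
  have h1 : f = (f - g) + g := by abel
  have h2 : Λ f = Λ (f - g) + Λ g := by
    conv_lhs => rw [h1]
    exact hΛ.map_add _ _ (bddLip_sub hf hg) hg
  rw [h2]; ring

/-- **Lemma A**: a norm-one functional supporting a sharp peak function is a
point evaluation against the (unique) support functional of the peak vector. -/
theorem lemmaA [Nonempty X] {Λ : (X → E) → 𝕜} (hΛ : IsNF Λ)
    {x : X} {et : E} (he : ‖et‖ = 1) (hp : Λ (bumpF 𝕜 2 x et) = 1) :
    ∃ ν : StrongDual 𝕜 E, ‖ν‖ = 1 ∧ ν et = 1 ∧ ∀ h, IsBddLip h → Λ h = ν (h x) := by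
  set p : X → E := bumpF 𝕜 2 x et with hpdef
  have hpbdd : IsBddLip p := isBddLip_bumpF two_pos x et
  -- step 1 : kill functions vanishing at x
  have kill : ∀ g : X → E, IsBddLip g → g x = 0 → Λ g = 0 := by
    intro g hg hgx
    by_contra hne
    obtain ⟨⟨K0, hK0⟩, ⟨C0, hC0⟩⟩ := id hg
    set K := max K0 1 with hKdef
    set C := max C0 1 with hCdef
    have hK1 : (0:ℝ) < K := lt_of_lt_of_le one_pos (le_max_right _ _)
    have hC1 : (0:ℝ) < C := lt_of_lt_of_le one_pos (le_max_right _ _)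
    have hKb : ∀ z z' : X, ‖g z - g z'‖ ≤ K * dist z z' := fun z z' =>
      (hK0 z z').trans (mul_le_mul_of_nonneg_right (le_max_left _ _) dist_nonneg)
    have hCb : ∀ z : X, ‖g z‖ ≤ C := fun z => (hC0 z).trans (le_max_left _ _)
    set t₀ : ℝ := min (1 / (2 * K)) (1 / C) with ht₀def
    have ht₀ : 0 < t₀ := lt_min (by positivity) (by positivity)
    -- the perturbed function stays in the unit ball
    have key : ∀ μ : 𝕜, ‖μ‖ ≤ t₀ → lipNorm (p + μ • g) ≤ 1 := by
      intro μ hμ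
      have hμK : ‖μ‖ * K ≤ 1 / 2 := by
        have h1 : ‖μ‖ ≤ 1 / (2 * K) := hμ.trans (min_le_left _ _)
        calc ‖μ‖ * K ≤ (1 / (2 * K)) * K := mul_le_mul_of_nonneg_right h1 hK1.le
          _ = 1 / 2 := by
            field_simp
      have hμC : ‖μ‖ * C ≤ 1 := by
        have h1 : ‖μ‖ ≤ 1 / C := hμ.trans (min_le_right _ _)
        calc ‖μ‖ * C ≤ (1 / C) * C := mul_le_mul_of_nonneg_right h1 hC1.le
          _ = 1 := by field_simp
      refine lipNorm_le one_pos.le (fun z z' => ?_) (fun z => ?_)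
      · have h1 : (p + μ • g) z - (p + μ • g) z' = (p z - p z') + μ • (g z - g z') := by
          simp [smul_sub]; abel
        rw [h1]
        refine (norm_add_le _ _).trans ?_
        have h2 : ‖p z - p z'‖ ≤ (1/2) * dist z z' := by
          have := bumpF_lipBound (𝕜 := 𝕜) two_pos x et z z'
          rwa [he] at this
        have h3 : ‖μ • (g z - g z')‖ ≤ (1/2) * dist z z' := by
          rw [norm_smul]
          calc ‖μ‖ * ‖g z - g z'‖ ≤ ‖μ‖ * (K * dist z z') :=
                mul_le_mul_of_nonneg_left (hKb z z') (norm_nonneg μ)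
            _ = (‖μ‖ * K) * dist z z' := by ring
            _ ≤ (1/2) * dist z z' := mul_le_mul_of_nonneg_right hμK dist_nonneg
        calc ‖p z - p z'‖ + ‖μ • (g z - g z')‖ ≤ (1/2) * dist z z' + (1/2) * dist z z' :=
              add_le_add h2 h3
          _ = 1 * dist z z' := by ring
      · rcases le_or_gt (dist z x) 2 with hd | hd
        · have h1 : ‖p z‖ ≤ 1 - dist z x / 2 := by
            rw [hpdef, norm_bumpF_apply, he, mul_one]
            apply max_le (le_refl _)
            linarith
          have h2 : ‖(μ • g) z‖ ≤ ‖μ‖ * (K * dist z x) := by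
            have : (μ • g) z = μ • g z := rfl
            rw [this, norm_smul]
            apply mul_le_mul_of_nonneg_left _ (norm_nonneg μ)
            have := hKb z x
            rwa [hgx, sub_zero] at this
          have h3 : ‖(p + μ • g) z‖ ≤ ‖p z‖ + ‖(μ • g) z‖ := norm_add_le _ _
          have h4 : ‖μ‖ * (K * dist z x) ≤ (1/2) * dist z x := by
            calc ‖μ‖ * (K * dist z x) = (‖μ‖ * K) * dist z x := by ring
              _ ≤ (1/2) * dist z x := mul_le_mul_of_nonneg_right hμK dist_nonneg
          calc ‖(p + μ • g) z‖ ≤ (1 - dist z x / 2) + (1/2) * dist z x := by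
                refine h3.trans (add_le_add h1 (h2.trans h4))
            _ = 1 := by ring
        · have h1 : p z = 0 := bumpF_far two_pos hd.le et
          have h2 : (p + μ • g) z = μ • g z := by
            show p z + μ • g z = μ • g z
            rw [h1, zero_add]
          rw [h2, norm_smul]
          calc ‖μ‖ * ‖g z‖ ≤ ‖μ‖ * C := mul_le_mul_of_nonneg_left (hCb z) (norm_nonneg μ)
            _ ≤ 1 := hμC
    -- conclude
    have hval : ∀ μ : 𝕜, ‖μ‖ ≤ t₀ → ‖1 + μ * Λ g‖ ≤ 1 := by
      intro μ hμ
      have h1 : Λ (p + μ • g) = 1 + μ * Λ g := by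
        rw [hΛ.map_add p (μ • g) hpbdd (bddLip_smul μ hg), hΛ.map_smul μ g hg, hp,
          smul_eq_mul]
      have h2 := hΛ.bound (p + μ • g) (bddLip_add hpbdd (bddLip_smul μ hg))
      rw [h1] at h2
      exact h2.trans (key μ hμ)
    set a : 𝕜 := Λ g with hadef
    have hna : 0 < ‖a‖ := norm_pos_iff.2 hne
    set μ : 𝕜 := ((t₀ / ‖a‖ : ℝ) : 𝕜) * (starRingEnd 𝕜) a with hμdef
    have hμn : ‖μ‖ = t₀ := by
      rw [hμdef, norm_mul, RCLike.norm_ofReal, RCLike.norm_conj,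
        abs_of_pos (by positivity : (0:ℝ) < t₀ / ‖a‖)]
      field_simp
    have hμa : μ * a = ((t₀ * ‖a‖ : ℝ) : 𝕜) := by
      rw [hμdef, mul_assoc, RCLike.conj_mul]
      have hr : (t₀ / ‖a‖) * (‖a‖ ^ 2) = t₀ * ‖a‖ := by
        rw [sq, div_mul_eq_mul_div]
        field_simp
      calc ((t₀ / ‖a‖ : ℝ) : 𝕜) * ((‖a‖ : 𝕜) ^ 2) = (((t₀ / ‖a‖) * ‖a‖ ^ 2 : ℝ) : 𝕜) := by
            push_cast; ring
        _ = ((t₀ * ‖a‖ : ℝ) : 𝕜) := by rw [hr]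
    have := hval μ (le_of_eq hμn)
    rw [hμa] at this
    have h5 : (1 : ℝ) + t₀ * ‖a‖ ≤ 1 := by
      have h6 : ‖(1 : 𝕜) + ((t₀ * ‖a‖ : ℝ) : 𝕜)‖ = 1 + t₀ * ‖a‖ := by
        have : (1 : 𝕜) + ((t₀ * ‖a‖ : ℝ) : 𝕜) = ((1 + t₀ * ‖a‖ : ℝ) : 𝕜) := by push_cast; ring
        rw [this, RCLike.norm_ofReal, abs_of_pos]
        positivity
      rwa [h6] at this
    nlinarith
  -- step 2 : the functional on E
  have hconst_add : ∀ e e' : E, constF X (e + e') = constF X e + constF X e' := by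
    intro e e'; funext z; rfl
  have hconst_smul : ∀ (c : 𝕜) (e : E), constF X (c • e) = c • constF X e := by
    intro c e; funext z; rfl
  set ν₀ : E →ₗ[𝕜] 𝕜 :=
    { toFun := fun e => Λ (constF X e)
      map_add' := fun e e' => by
        show Λ (constF X (e + e')) = Λ (constF X e) + Λ (constF X e')
        rw [hconst_add]; exact hΛ.map_add _ _ (isBddLip_const e) (isBddLip_const e')
      map_smul' := fun c e => by
        show Λ (constF X (c • e)) = (RingHom.id 𝕜) c • Λ (constF X e)
        rw [hconst_smul, hΛ.map_smul c _ (isBddLip_const e)]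
        rfl } with hν₀def
  have hν₀b : ∀ e : E, ‖ν₀ e‖ ≤ 1 * ‖e‖ := by
    intro e
    rw [one_mul]
    have := hΛ.bound (constF X e) (isBddLip_const e)
    rwa [lipNorm_const] at this
  set ν : StrongDual 𝕜 E := LinearMap.mkContinuous ν₀ 1 hν₀b with hνdef
  have hνapp : ∀ e : E, ν e = Λ (constF X e) := fun e => rfl
  have hνet : ν et = 1 := by
    rw [hνapp]
    have h1 : constF X et = p + (constF X et - p) := by abel
    have h2 : (constF X et - p) x = 0 := by
      show constF X et x - p x = 0
      rw [hpdef, bumpF_self]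
      show et - et = 0
      simp
    have h3 : IsBddLip (constF X et - p) := bddLip_sub (isBddLip_const et) hpbdd
    rw [h1, hΛ.map_add _ _ hpbdd h3, hp, kill _ h3 h2, add_zero]
  have hνn : ‖ν‖ = 1 := by
    apply le_antisymm
    · exact LinearMap.mkContinuous_norm_le ν₀ one_pos.le hν₀b
    · have h1 : (1:ℝ) = ‖ν et‖ := by rw [hνet]; simp
      rw [h1]
      calc ‖ν et‖ ≤ ‖ν‖ * ‖et‖ := ν.le_opNorm et
        _ = ‖ν‖ := by rw [he, mul_one]
  refine ⟨ν, hνn, hνet, fun h hh => ?_⟩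
  have h1 : h = (h - constF X (h x)) + constF X (h x) := by abel
  have h2 : IsBddLip (h - constF X (h x)) := bddLip_sub hh (isBddLip_const _)
  have h3 : (h - constF X (h x)) x = 0 := by
    show h x - constF X (h x) x = 0
    simp [constF]
  conv_lhs => rw [h1]
  rw [hΛ.map_add _ _ h2 (isBddLip_const _), kill _ h2 h3, zero_add, hνapp]

lemma lipNorm_zero [Nonempty X] : lipNorm (0 : X → E) = 0 := by
  apply le_antisymm
  · exact lipNorm_le le_rfl (fun z z' => by simp) (fun z => by simp)
  · exact lipNorm_nonneg _

/-- reflexivity gives norm attainment -/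
lemma attain (hrefl : IsReflexiveSp 𝕜 E) (ν : StrongDual 𝕜 E) (hν : ‖ν‖ = 1) :
    ∃ e : E, ‖e‖ = 1 ∧ ν e = 1 := by
  have hν0 : ν ≠ 0 := by
    intro h
    rw [h] at hν
    simp at hν
  obtain ⟨G, hG1, hG2⟩ := exists_dual_vector 𝕜 ν (norm_ne_zero_iff.2 hν0)
  obtain ⟨e, he⟩ := hrefl G
  refine ⟨e, ?_, ?_⟩
  · have h1 : ‖NormedSpace.inclusionInDoubleDual 𝕜 E e‖ = ‖e‖ :=
      (NormedSpace.inclusionInDoubleDualLi 𝕜 (E := E)).norm_map e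
    rw [he] at h1
    rw [← h1, hG1]
  · have h2 : NormedSpace.inclusionInDoubleDual 𝕜 E e ν = ν e :=
      NormedSpace.dual_def 𝕜 E e ν
    rw [he] at h2
    rw [← h2, hG2, hν]
    simp

end AuxL
end BasicX

section CoreSection

open scoped Classical

variable {X : Type*} [MetricSpace X] {Y : Type*} [MetricSpace Y]
  {E : Type*} [NormedAddCommGroup E] [NormedSpace 𝕜 E]

namespace AuxL

/-- the inverse of a surjective Lipschitz isometry -/
def invT (T : (X → E) → (Y → E)) (hT : IsLipIso 𝕜 T) : (Y → E) → (X → E) :=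
  fun k => if h : IsBddLip k then (hT.surjOn k h).choose else 0

lemma T_map_sub {T : (X → E) → (Y → E)} (hT : IsLipIso 𝕜 T) {f g : X → E}
    (hf : IsBddLip f) (hg : IsBddLip g) :
    T (f - g) = T f - T g := by
  have h1 : f = (f - g) + g := by abel
  have h2 : T f = T (f - g) + T g := by
    conv_lhs => rw [h1]
    exact hT.map_add _ _ (bddLip_sub hf hg) hg
  rw [h2]; abel

lemma T_inj [Nonempty X] [Nonempty Y] {T : (X → E) → (Y → E)} (hT : IsLipIso 𝕜 T)
    {f g : X → E} (hf : IsBddLip f) (hg : IsBddLip g)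
    (h : T f = T g) : f = g := by
  have h1 : T (f - g) = 0 := by rw [T_map_sub hT hf hg, h]; abel
  have h2 : lipNorm (f - g) = 0 := by
    rw [← hT.norm_map _ (bddLip_sub hf hg), h1, lipNorm_zero]
  have h3 : f - g = 0 := eq_zero_of_lipNorm_eq_zero (bddLip_sub hf hg) h2
  exact sub_eq_zero.mp h3

lemma invT_bdd {T : (X → E) → (Y → E)} (hT : IsLipIso 𝕜 T) {k : Y → E} (hk : IsBddLip k) :
    IsBddLip (invT T hT k) := by
  rw [invT, dif_pos hk]
  exact (hT.surjOn k hk).choose_spec.1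

lemma T_invT {T : (X → E) → (Y → E)} (hT : IsLipIso 𝕜 T) {k : Y → E} (hk : IsBddLip k) :
    T (invT T hT k) = k := by
  rw [invT, dif_pos hk]
  exact (hT.surjOn k hk).choose_spec.2

lemma invT_T [Nonempty X] [Nonempty Y] {T : (X → E) → (Y → E)} (hT : IsLipIso 𝕜 T)
    {f : X → E} (hf : IsBddLip f) : invT T hT (T f) = f := by
  apply T_inj hT (invT_bdd hT (hT.mapsLip f hf)) hf
  exact T_invT hT (hT.mapsLip f hf)

lemma invT_isLipIso [Nonempty X] [Nonempty Y] {T : (X → E) → (Y → E)} (hT : IsLipIso 𝕜 T) :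
    IsLipIso 𝕜 (invT T hT) := by
  constructor
  · intro k hk; exact invT_bdd hT hk
  · intro k k' hk hk'
    apply T_inj hT (invT_bdd hT (bddLip_add hk hk'))
      (bddLip_add (invT_bdd hT hk) (invT_bdd hT hk'))
    rw [T_invT hT (bddLip_add hk hk'),
      hT.map_add _ _ (invT_bdd hT hk) (invT_bdd hT hk'), T_invT hT hk, T_invT hT hk']
  · intro c k hk
    apply T_inj hT (invT_bdd hT (bddLip_smul c hk)) (bddLip_smul c (invT_bdd hT hk))
    rw [T_invT hT (bddLip_smul c hk), hT.map_smul c _ (invT_bdd hT hk), T_invT hT hk]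
  · intro k hk
    have := hT.norm_map _ (invT_bdd hT hk)
    rw [T_invT hT hk] at this
    exact this.symm
  · intro f hf
    exact ⟨T f, hT.mapsLip f hf, invT_T hT hf⟩

/-- evaluation functionals are norm-one functionals -/
lemma isNF_eval [Nonempty X] {T : (X → E) → (Y → E)} (hT : IsLipIso 𝕜 T)
    (ν : StrongDual 𝕜 E) (hν : ‖ν‖ ≤ 1) (y : Y) :
    IsNF (fun h : X → E => ν (T h y)) := by
  constructor
  · intro f g hf hg
    show ν (T (f + g) y) = ν (T f y) + ν (T g y)
    rw [hT.map_add f g hf hg]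
    show ν (T f y + T g y) = _
    rw [ν.map_add]
  · intro c f hf
    show ν (T (c • f) y) = c • ν (T f y)
    rw [hT.map_smul c f hf]
    show ν (c • T f y) = _
    rw [ν.map_smul]
  · intro f hf
    calc ‖ν (T f y)‖ ≤ ‖ν‖ * ‖T f y‖ := ν.le_opNorm _
      _ ≤ 1 * ‖T f y‖ := mul_le_mul_of_nonneg_right hν (norm_nonneg _)
      _ = ‖T f y‖ := one_mul _
      _ ≤ lipNorm (T f) := norm_le_lipNorm (hT.mapsLip f hf) y
      _ = lipNorm f := hT.norm_map f hf

/-- **uniqueness of support**: any norm-one functional supporting the preimage of the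
peak at `y` in a smooth direction is the evaluation `ν ∘ δ_y ∘ T`. -/
lemma uniq [Nonempty X] [Nonempty Y] (hsm : IsSmooth 𝕜 E)
    {T : (X → E) → (Y → E)} (hT : IsLipIso 𝕜 T)
    {e' : E} (he' : ‖e'‖ = 1) {ν : StrongDual 𝕜 E} (hν : ‖ν‖ = 1) (hνe : ν e' = 1)
    (y : Y) {Φ : (X → E) → 𝕜} (hΦ : IsNF Φ)
    (hsupp : Φ (invT T hT (bumpF 𝕜 2 y e')) = 1) :
    ∀ h, IsBddLip h → Φ h = ν (T h y) := by
  set q : Y → E := bumpF 𝕜 2 y e' with hq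
  have hqb : IsBddLip q := isBddLip_bumpF two_pos y e'
  set Ψ : (Y → E) → 𝕜 := fun k => Φ (invT T hT k) with hΨ
  have hΨNF : IsNF Ψ := by
    constructor
    · intro k k' hk hk'
      show Φ (invT T hT (k + k')) = Φ (invT T hT k) + Φ (invT T hT k')
      rw [(invT_isLipIso hT).map_add k k' hk hk']
      exact hΦ.map_add _ _ (invT_bdd hT hk) (invT_bdd hT hk')
    · intro c k hk
      show Φ (invT T hT (c • k)) = c • Φ (invT T hT k)
      rw [(invT_isLipIso hT).map_smul c k hk]
      exact hΦ.map_smul c _ (invT_bdd hT hk)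
    · intro k hk
      show ‖Φ (invT T hT k)‖ ≤ lipNorm k
      rw [← (invT_isLipIso hT).norm_map k hk]
      exact hΦ.bound _ (invT_bdd hT hk)
  have hΨq : Ψ q = 1 := hsupp
  obtain ⟨ν₁, hν₁, hν₁e, hν₁eval⟩ := lemmaA hΨNF he' hΨq
  have huniq := hsm e' he'
  have h1 : ν₁ = ν := by
    obtain ⟨u₀, -, hu₀⟩ := huniq
    rw [hu₀ ν₁ ⟨hν₁, hν₁e⟩, hu₀ ν ⟨hν, hνe⟩]
  intro h hh
  have h2 : Ψ (T h) = Φ h := by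
    show Φ (invT T hT (T h)) = Φ h
    rw [invT_T hT hh]
  rw [← h2, hν₁eval (T h) (hT.mapsLip h hh), h1]

/-- **node dichotomy**: each unit functional supported at a smooth direction either
localizes at a point of `X`, or kills all constants. -/
lemma node_or [Nonempty X] [Nonempty Y] [CompactSpace X] (hsm : IsSmooth 𝕜 E)
    {T : (X → E) → (Y → E)} (hT : IsLipIso 𝕜 T) (y : Y)
    {e' : E} (he' : ‖e'‖ = 1) {ν : StrongDual 𝕜 E} (hν : ‖ν‖ = 1) (hνe : ν e' = 1) :
    (∃ (x' : X) (μ : StrongDual 𝕜 E), ‖μ‖ = 1 ∧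
        ∀ h, IsBddLip h → ν (T h y) = μ (h x')) ∨
    (∀ e : E, ν (T (constF X e) y) = 0) := by
  set q : Y → E := bumpF 𝕜 2 y e' with hq
  have hqb : IsBddLip q := isBddLip_bumpF two_pos y e'
  set r : X → E := invT T hT q with hr
  have hrb : IsBddLip r := invT_bdd hT hqb
  have hrn : lipNorm r = 1 := by
    have h1 := hT.norm_map r hrb
    rw [T_invT hT hqb] at h1
    rw [← h1, hq, lipNorm_bumpF one_le_two, he']
  -- maximum of ‖r‖ on compact X
  have hcont : Continuous fun z : X => ‖r z‖ := by
    obtain ⟨⟨K, hK⟩, -⟩ := id hrb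
    have hlip : LipschitzWith (Real.toNNReal K) r := by
      apply LipschitzWith.of_dist_le_mul
      intro z z'
      rw [dist_eq_norm]
      refine (hK z z').trans ?_
      apply mul_le_mul_of_nonneg_right _ dist_nonneg
      rw [Real.coe_toNNReal']
      exact le_max_left _ _
    exact hlip.continuous.norm
  obtain ⟨x₀, -, hx₀⟩ := IsCompact.exists_isMaxOn isCompact_univ
    ⟨Classical.arbitrary X, Set.mem_univ _⟩ hcont.continuousOn
  have hsup : ∀ z : X, ‖r z‖ ≤ ‖r x₀‖ := fun z => hx₀ (Set.mem_univ z)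
  have hle1 : ‖r x₀‖ ≤ 1 := by
    have := norm_le_lipNorm hrb x₀
    rwa [hrn] at this
  rcases eq_or_lt_of_le hle1 with heq | hlt
  · -- the sup is attained with value 1 : node case
    left
    have hne0 : r x₀ ≠ 0 := by
      intro h0
      rw [h0] at heq
      simp at heq
    obtain ⟨μ, hμ1, hμ2⟩ := exists_dual_vector 𝕜 (r x₀) (norm_ne_zero_iff.2 hne0)
    have hΦNF : IsNF (fun h : X → E => μ (h x₀)) := by
      constructor
      · intro f g hf hg
        show μ (f x₀ + g x₀) = μ (f x₀) + μ (g x₀)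
        rw [μ.map_add]
      · intro c f hf
        show μ (c • f x₀) = c • μ (f x₀)
        rw [μ.map_smul]
      · intro f hf
        calc ‖μ (f x₀)‖ ≤ ‖μ‖ * ‖f x₀‖ := μ.le_opNorm _
          _ = ‖f x₀‖ := by rw [hμ1, one_mul]
          _ ≤ lipNorm f := norm_le_lipNorm hf x₀
    have hΦr : μ (r x₀) = 1 := by
      rw [hμ2, heq]
      simp
    have heval := uniq hsm hT he' hν hνe y hΦNF hΦr
    exact ⟨x₀, μ, hμ1, fun h hh => (heval h hh).symm⟩
  · -- the sup is strictly less than 1 : the Lipschitz constant carries the norm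
    right
    have hciSup : (⨆ z, ‖r z‖) ≤ ‖r x₀‖ := ciSup_le hsup
    have hlc : lipConst r = 1 := by
      have h1 : max (lipConst r) (⨆ z, ‖r z‖) = 1 := hrn
      rcases max_cases (lipConst r) (⨆ z, ‖r z‖) with ⟨h2, h3⟩ | ⟨h2, h3⟩
      · rw [h2] at h1; exact h1
      · rw [h2] at h1
        exfalso; linarith
    have hex : ∀ n : ℕ, ∃ z z' : X, (1 - 1/(n+1)) * dist z z' < ‖r z - r z'‖ := by
      intro n
      by_contra hcon
      push_neg at hcon
      have hn0 : (0:ℝ) < 1/((n:ℝ)+1) := by positivity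
      have h0 : (0:ℝ) ≤ 1 - 1/(n+1) := by
        have h00 : (1:ℝ)/((n:ℝ)+1) ≤ 1 := by
          rw [div_le_one (by positivity)]
          have := Nat.cast_nonneg (α := ℝ) n
          linarith
        linarith
      have := lipConst_le h0 hcon
      rw [hlc] at this
      linarith
    choose zs zs' hzs using hex
    have hd0 : ∀ n, 0 < dist (zs n) (zs' n) := by
      intro n
      rcases lt_or_eq_of_le (dist_nonneg : (0:ℝ) ≤ dist (zs n) (zs' n)) with h | h
      · exact h
      · exfalso
        have hzz : zs n = zs' n := by rwa [eq_comm, dist_eq_zero] at h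
        have := hzs n
        rw [hzz] at this
        simp at this
    have hdiff0 : ∀ n, r (zs n) - r (zs' n) ≠ 0 := by
      intro n h
      have h1 := hzs n
      rw [h] at h1
      simp only [norm_zero] at h1
      have h0 : (0:ℝ) ≤ 1 - 1/(n+1) := by
        have h00 : (1:ℝ)/((n:ℝ)+1) ≤ 1 := by
          rw [div_le_one (by positivity)]
          have := Nat.cast_nonneg (α := ℝ) n
          linarith
        linarith
      nlinarith [hd0 n]
    choose es hes1 hes2 using fun n => exists_dual_vector 𝕜 _ (norm_ne_zero_iff.2 (hdiff0 n))
    set Φn : ℕ → (X → E) → 𝕜 :=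
      fun n h => es n (h (zs n) - h (zs' n)) / ((dist (zs n) (zs' n) : ℝ) : 𝕜) with hΦn
    have hΦnbound : ∀ n (h : X → E), IsBddLip h → ‖Φn n h‖ ≤ lipConst h := by
      intro n h hh
      have h1 : ‖es n (h (zs n) - h (zs' n))‖ ≤ lipConst h * dist (zs n) (zs' n) := by
        calc ‖es n (h (zs n) - h (zs' n))‖ ≤ ‖es n‖ * ‖h (zs n) - h (zs' n)‖ :=
              (es n).le_opNorm _
          _ = ‖h (zs n) - h (zs' n)‖ := by rw [hes1 n, one_mul]
          _ ≤ lipConst h * dist (zs n) (zs' n) := lipConst_spec hh _ _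
      rw [hΦn]
      show ‖es n (h (zs n) - h (zs' n)) / ((dist (zs n) (zs' n) : ℝ) : 𝕜)‖ ≤ lipConst h
      rw [norm_div, RCLike.norm_ofReal, abs_of_pos (hd0 n), div_le_iff₀ (hd0 n)]
      exact h1
    have hΦnr : ∀ n, Φn n r =
        ((‖r (zs n) - r (zs' n)‖ / dist (zs n) (zs' n) : ℝ) : 𝕜) := by
      intro n
      rw [hΦn]
      show es n (r (zs n) - r (zs' n)) / ((dist (zs n) (zs' n) : ℝ) : 𝕜) = _
      rw [hes2 n]
      rw [RCLike.ofReal_div]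
    set U : Ultrafilter ℕ := Ultrafilter.of Filter.atTop with hU
    have hUle : (U : Filter ℕ) ≤ Filter.atTop := Ultrafilter.of_le _
    have hexlim : ∀ h : X → E, IsBddLip h →
        ∃ a : 𝕜, Filter.Tendsto (fun n => Φn n h) (U : Filter ℕ) (nhds a) := by
      intro h hh
      have hcomp : IsCompact (Metric.closedBall (0:𝕜) (lipConst h)) :=
        isCompact_closedBall _ _
      have hle : (Ultrafilter.map (fun n => Φn n h) U : Filter 𝕜)
          ≤ Filter.principal (Metric.closedBall (0:𝕜) (lipConst h)) := by
        rw [Ultrafilter.coe_map, Filter.le_principal_iff, Filter.mem_map]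
        apply Filter.univ_mem'
        intro n
        show Φn n h ∈ Metric.closedBall (0:𝕜) (lipConst h)
        rw [Metric.mem_closedBall, dist_zero_right]
        exact hΦnbound n h hh
      obtain ⟨a, -, ha⟩ := hcomp.ultrafilter_le_nhds (Ultrafilter.map (fun n => Φn n h) U) hle
      refine ⟨a, ?_⟩
      rwa [Ultrafilter.coe_map] at ha
    set Φ : (X → E) → 𝕜 :=
      fun h => if hh : IsBddLip h then (hexlim h hh).choose else 0 with hΦ
    have hΦtend : ∀ (h : X → E) (hh : IsBddLip h),
        Filter.Tendsto (fun n => Φn n h) (U : Filter ℕ) (nhds (Φ h)) := by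
      intro h hh
      rw [hΦ]
      show Filter.Tendsto _ _ (nhds (if hh' : IsBddLip h then (hexlim h hh').choose else 0))
      rw [dif_pos hh]
      exact (hexlim h hh).choose_spec
    have hΦNF : IsNF Φ := by
      constructor
      · intro f g hf hg
        have heq : (fun n => Φn n (f + g)) = fun n => Φn n f + Φn n g := by
          funext n
          rw [hΦn]
          show es n ((f + g) (zs n) - (f + g) (zs' n)) / _ = _ + _
          have h1 : (f + g) (zs n) - (f + g) (zs' n)
              = (f (zs n) - f (zs' n)) + (g (zs n) - g (zs' n)) := by
            show f (zs n) + g (zs n) - (f (zs' n) + g (zs' n)) = _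
            abel
          rw [h1, (es n).map_add, add_div]
        have h1 : Filter.Tendsto (fun n => Φn n (f + g)) (U : Filter ℕ)
            (nhds (Φ f + Φ g)) := by
          rw [heq]
          exact (hΦtend f hf).add (hΦtend g hg)
        exact tendsto_nhds_unique (hΦtend (f + g) (bddLip_add hf hg)) h1
      · intro c f hf
        have heq : (fun n => Φn n (c • f)) = fun n => c * Φn n f := by
          funext n
          rw [hΦn]
          show es n ((c • f) (zs n) - (c • f) (zs' n)) / _ = _
          have h1 : (c • f) (zs n) - (c • f) (zs' n) = c • (f (zs n) - f (zs' n)) := by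
            show c • f (zs n) - c • f (zs' n) = _
            rw [smul_sub]
          rw [h1, (es n).map_smul, smul_eq_mul, mul_div_assoc]
        have h1 : Filter.Tendsto (fun n => Φn n (c • f)) (U : Filter ℕ)
            (nhds (c * Φ f)) := by
          rw [heq]
          exact (hΦtend f hf).const_mul c
        have h2 := tendsto_nhds_unique (hΦtend (c • f) (bddLip_smul c hf)) h1
        rw [h2, smul_eq_mul]
      · intro f hf
        have h1 : Filter.Tendsto (fun n => ‖Φn n f‖) (U : Filter ℕ) (nhds ‖Φ f‖) :=
          (hΦtend f hf).norm
        have h2 : ‖Φ f‖ ≤ lipConst f :=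
          le_of_tendsto h1 (Filter.Eventually.of_forall fun n => hΦnbound n f hf)
        exact h2.trans (le_max_left _ _)
    have hΦr : Φ r = 1 := by
      have hs1 : ∀ n, ‖r (zs n) - r (zs' n)‖ / dist (zs n) (zs' n) ≤ 1 := by
        intro n
        rw [div_le_one (hd0 n)]
        have := lipConst_spec hrb (zs n) (zs' n)
        rwa [hlc, one_mul] at this
      have hs2 : ∀ n : ℕ, 1 - 1/((n:ℝ)+1) ≤ ‖r (zs n) - r (zs' n)‖ / dist (zs n) (zs' n) := by
        intro n
        rw [le_div_iff₀ (hd0 n)]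
        exact (hzs n).le
      have hreal : Filter.Tendsto
          (fun n => (‖r (zs n) - r (zs' n)‖ / dist (zs n) (zs' n) : ℝ))
          Filter.atTop (nhds 1) := by
        have hlow : Filter.Tendsto (fun n : ℕ => 1 - 1/((n:ℝ)+1)) Filter.atTop (nhds 1) := by
          have := tendsto_one_div_add_atTop_nhds_zero_nat (𝕜 := ℝ)
          have h3 := Filter.Tendsto.const_sub (1:ℝ) this
          simpa using h3
        exact tendsto_of_tendsto_of_tendsto_of_le_of_le hlow tendsto_const_nhds hs2 hs1
      have hk : Filter.Tendsto (fun n => Φn n r) Filter.atTop (nhds (1:𝕜)) := by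
        have h4 : Filter.Tendsto
            (fun n => ((‖r (zs n) - r (zs' n)‖ / dist (zs n) (zs' n) : ℝ) : 𝕜))
            Filter.atTop (nhds ((1:ℝ):𝕜)) :=
          (RCLike.continuous_ofReal.tendsto _).comp hreal
        simp only [RCLike.ofReal_one] at h4
        have h5 : (fun n => Φn n r)
            = fun n => ((‖r (zs n) - r (zs' n)‖ / dist (zs n) (zs' n) : ℝ) : 𝕜) := by
          funext n; exact hΦnr n
        rw [h5]
        exact h4
      exact tendsto_nhds_unique (hΦtend r hrb) (hk.mono_left hUle)
    have heval := uniq hsm hT he' hν hνe y hΦNF hΦr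
    intro e
    have h3 : Φ (constF X e) = ν (T (constF X e) y) := heval _ (isBddLip_const e)
    have h4 : Φ (constF X e) = 0 := by
      have h5 : ∀ n, Φn n (constF X e) = 0 := by
        intro n
        rw [hΦn]
        show es n (constF X e (zs n) - constF X e (zs' n)) / _ = 0
        have : constF X e (zs n) - constF X e (zs' n) = 0 := by
          show e - e = 0; simp
        rw [this, (es n).map_zero, zero_div]
      have h6 : Filter.Tendsto (fun n => Φn n (constF X e)) (U : Filter ℕ) (nhds 0) := by
        have : (fun n => Φn n (constF X e)) = fun _ => (0:𝕜) := funext h5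
        rw [this]
        exact tendsto_const_nhds
      exact tendsto_nhds_unique (hΦtend _ (isBddLip_const e)) h6
    rw [← h3, h4]

lemma unit_ne_zero {μ : StrongDual 𝕜 E} (hμ : ‖μ‖ = 1) : μ ≠ 0 := by
  intro h
  rw [h] at hμ
  simp at hμ

/-- every unit functional is a node -/
lemma node_all [Nonempty X] [Nonempty Y] [CompactSpace X] (hsm : IsSmooth 𝕜 E)
    (hrefl : IsReflexiveSp 𝕜 E)
    {T : (X → E) → (Y → E)} (hT : IsLipIso 𝕜 T) (y : Y) (x : X)
    {w lam : StrongDual 𝕜 E} (hw : ‖w‖ = 1) (hlam : ‖lam‖ = 1)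
    (hseed : ∀ h, IsBddLip h → w (T h y) = lam (h x)) :
    ∀ ν : StrongDual 𝕜 E, ‖ν‖ = 1 →
      ∃ (x' : X) (μ : StrongDual 𝕜 E), ‖μ‖ = 1 ∧
        ∀ h, IsBddLip h → ν (T h y) = μ (h x') := by
  intro ν hν
  obtain ⟨e', he', hνe⟩ := attain hrefl ν hν
  rcases node_or hsm hT y he' hν hνe with h | hkill
  · exact h
  exfalso
  -- killer case for ν : derive a contradiction
  set c : 𝕜 := ((3:ℝ) : 𝕜) with hc
  set ω : StrongDual 𝕜 E := w + c • ν with hω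
  have hcν : ‖c • ν‖ = 3 := by
    rw [norm_smul, hν, mul_one, hc, RCLike.norm_ofReal]
    norm_num
  have hω_ge : (2:ℝ) ≤ ‖ω‖ := by
    have h2 : c • ν = ω - w := by rw [hω]; abel
    have h3 : ‖c • ν‖ ≤ ‖ω‖ + ‖w‖ := by
      rw [h2]
      exact (norm_sub_le _ _)
    rw [hcν, hw] at h3
    linarith
  set s : ℝ := ‖ω‖ with hs
  have hs0 : (0:ℝ) < s := by linarith
  set ν3 : StrongDual 𝕜 E := ((s⁻¹ : ℝ) : 𝕜) • ω with hν3def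
  have hν3 : ‖ν3‖ = 1 := by
    rw [hν3def, norm_smul, RCLike.norm_ofReal, abs_of_pos (inv_pos.2 hs0), ← hs]
    field_simp
  have hν3app : ∀ v : E, ν3 v = ((s⁻¹ : ℝ) : 𝕜) * (w v + c * ν v) := by
    intro v
    rw [hν3def]
    rfl
  obtain ⟨e3, he3, hν3e⟩ := attain hrefl ν3 hν3
  have hconst_x : ∀ e : E, constF X e x = e := fun e => rfl
  rcases node_or hsm hT y he3 hν3 hν3e with ⟨x1, μ1, hμ1, hnode⟩ | hkill3
  · -- node for ν3 : it must be (s⁻¹ • lam), of norm s⁻¹ < 1, contradiction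
    have hkey : ∀ e : E, μ1 e = ((s⁻¹ : ℝ) : 𝕜) * lam e := by
      intro e
      have h1 := hnode (constF X e) (isBddLip_const e)
      have h2 : μ1 (constF X e x1) = μ1 e := rfl
      rw [h2] at h1
      rw [← h1, hν3app, hkill e, hseed (constF X e) (isBddLip_const e), hconst_x e]
      ring
    have hμeq : μ1 = ((s⁻¹ : ℝ) : 𝕜) • lam := by
      ext e
      rw [hkey e]
      rfl
    have hn1 : ‖μ1‖ = s⁻¹ := by
      rw [hμeq, norm_smul, RCLike.norm_ofReal, abs_of_pos (inv_pos.2 hs0), hlam, mul_one]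
    rw [hμ1] at hn1
    have : s = 1 := by
      field_simp at hn1
      linarith
    linarith
  · -- killer for ν3 : lam vanishes, contradiction
    have hlam0 : ∀ e : E, lam e = 0 := by
      intro e
      have h1 := hkill3 e
      rw [hν3app, hkill e, hseed (constF X e) (isBddLip_const e), hconst_x e] at h1
      have h2 : ((s⁻¹ : ℝ) : 𝕜) ≠ 0 := by
        rw [ne_eq, RCLike.ofReal_eq_zero]
        exact inv_ne_zero hs0.ne'
      rw [mul_zero, add_zero] at h1
      rcases mul_eq_zero.1 h1 with h | h
      · exact absurd h h2
      · exact h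
    have : lam = 0 := by ext e; exact hlam0 e
    exact unit_ne_zero hlam this

/-- uniqueness of node data -/
lemma node_unique [Nonempty X] {x₁ x₂ : X} {μ₁ μ₂ : StrongDual 𝕜 E}
    (hμ₁ : μ₁ ≠ 0) (heq : ∀ h : X → E, IsBddLip h → μ₁ (h x₁) = μ₂ (h x₂)) :
    x₁ = x₂ ∧ μ₁ = μ₂ := by
  by_cases hx : x₁ = x₂
  · subst hx
    refine ⟨rfl, ?_⟩
    ext e
    exact heq (constF X e) (isBddLip_const e)
  · exfalso
    apply hμ₁
    ext e
    set m : ℝ := min (dist x₁ x₂) 1 with hm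
    have hm0 : 0 < m := lt_min (dist_pos.2 hx) one_pos
    have h1 := heq (bumpF 𝕜 m x₁ e) (isBddLip_bumpF hm0 x₁ e)
    rw [bumpF_self] at h1
    have hfar : m ≤ dist x₂ x₁ := by
      rw [dist_comm]
      exact min_le_left _ _
    rw [bumpF_far hm0 hfar e] at h1
    rw [h1]
    simp

/-- **core (pointwise standardness)**: `T h y` only depends on `h x`. -/
theorem core_fun [Nonempty X] [Nonempty Y] [CompactSpace X] (hsm : IsSmooth 𝕜 E)
    (hrefl : IsReflexiveSp 𝕜 E)
    {T : (X → E) → (Y → E)} (hT : IsLipIso 𝕜 T) (y : Y) (x : X)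
    {w lam : StrongDual 𝕜 E} (hw : ‖w‖ = 1) (hlam : ‖lam‖ = 1)
    (hseed : ∀ h, IsBddLip h → w (T h y) = lam (h x)) :
    ∀ h, IsBddLip h → T h y = T (constF X (h x)) y := by
  have hnode := node_all hsm hrefl hT y x hw hlam hseed
  choose xf μf hμf hrel using hnode
  -- three-point argument : the node point is independent of the functional
  have hconst : ∀ (ν ν' : StrongDual 𝕜 E) (hν : ‖ν‖ = 1) (hν' : ‖ν'‖ = 1),
      xf ν hν = xf ν' hν' := by
    intro ν ν' hν hν'
    by_cases hσ : ν + ν' = 0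
    · -- ν' = -ν
      have h3 : ν' = -ν := (neg_eq_of_add_eq_zero_right hσ).symm
      have heq2 : ∀ h : X → E, IsBddLip h →
          μf ν' hν' (h (xf ν' hν')) = (-(μf ν hν)) (h (xf ν hν)) := by
        intro h hh
        have h2 := hrel ν' hν' h hh
        have h1 := hrel ν hν h hh
        rw [← h2, h3]
        have h4 : (-ν) (T h y) = -(ν (T h y)) := rfl
        rw [h4, h1]
        rfl
      have := node_unique (unit_ne_zero (hμf ν' hν')) heq2
      exact this.1.symm
    · set s : ℝ := ‖ν + ν'‖ with hsdef
      have hs0 : (0:ℝ) < s := by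
        rw [hsdef]
        exact norm_pos_iff.2 hσ
      set ν3 : StrongDual 𝕜 E := ((s⁻¹ : ℝ) : 𝕜) • (ν + ν') with hν3def
      have hν3 : ‖ν3‖ = 1 := by
        rw [hν3def, norm_smul, RCLike.norm_ofReal, abs_of_pos (inv_pos.2 hs0), ← hsdef]
        field_simp
      set x1 := xf ν hν
      set x2 := xf ν' hν'
      set x3 := xf ν3 hν3
      set μ1 := μf ν hν
      set μ2 := μf ν' hν'
      set μ3 := μf ν3 hν3
      have hrel3 : ∀ h, IsBddLip h →
          μ1 (h x1) + μ2 (h x2) = ((s : ℝ) : 𝕜) * μ3 (h x3) := by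
        intro h hh
        have h1 := hrel ν hν h hh
        have h2 := hrel ν' hν' h hh
        have h3 := hrel ν3 hν3 h hh
        have h4 : ν3 (T h y) = ((s⁻¹ : ℝ) : 𝕜) * (ν (T h y) + ν' (T h y)) := by
          rw [hν3def]; rfl
        rw [h1, h2, h3] at h4
        have h5 : ((s:ℝ):𝕜) * ν3 (T h y) = ((s:ℝ):𝕜) * (((s⁻¹ : ℝ) : 𝕜)
            * (μ1 (h x1) + μ2 (h x2))) := by rw [← h4, h3]
        have h6 : ((s:ℝ):𝕜) * ((s⁻¹:ℝ):𝕜) = 1 := by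
          rw [← RCLike.ofReal_mul, mul_inv_cancel₀ hs0.ne']
          simp
        rw [h3] at h5
        rw [← mul_assoc, h6, one_mul] at h5
        exact h5.symm
      by_cases h31 : x3 = x1
      · by_cases h32 : x3 = x2
        · rw [← h31, ← h32]
        · -- relocate μ2 : node_unique forces x2 = x1
          set μc : StrongDual 𝕜 E := ((s : ℝ) : 𝕜) • μ3 - μ1 with hμc
          have heq2 : ∀ h : X → E, IsBddLip h → μ2 (h x2) = μc (h x1) := by
            intro h hh
            have := hrel3 h hh
            rw [h31] at this
            have happ : μc (h x1) = ((s : ℝ) : 𝕜) * μ3 (h x1) - μ1 (h x1) := rfl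
            rw [happ]
            rw [← this]
            ring
          have := node_unique (unit_ne_zero (hμf ν' hν')) heq2
          exact this.1.symm
      · by_cases h32 : x3 = x2
        · set μc : StrongDual 𝕜 E := ((s : ℝ) : 𝕜) • μ3 - μ2 with hμc
          have heq2 : ∀ h : X → E, IsBddLip h → μ1 (h x1) = μc (h x2) := by
            intro h hh
            have := hrel3 h hh
            rw [h32] at this
            have happ : μc (h x2) = ((s : ℝ) : 𝕜) * μ3 (h x2) - μ2 (h x2) := rfl
            rw [happ, ← this]
            ring
          exact (node_unique (unit_ne_zero (hμf ν hν)) heq2).1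
        · -- x3 differs from both : triple bump kills μ3
          exfalso
          set m3 : ℝ := min (min (dist x1 x3) (dist x2 x3)) 1 with hm3
          have hm30 : 0 < m3 := by
            apply lt_min _ one_pos
            apply lt_min
            · exact dist_pos.2 fun hh => h31 hh.symm
            · exact dist_pos.2 fun hh => h32 hh.symm
          have hμ3zero : μ3 = 0 := by
            ext e
            have h1 := hrel3 (bumpF 𝕜 m3 x3 e) (isBddLip_bumpF hm30 x3 e)
            have hfar1 : m3 ≤ dist x1 x3 := (min_le_left _ _).trans (min_le_left _ _)
            have hfar2 : m3 ≤ dist x2 x3 := (min_le_left _ _).trans (min_le_right _ _)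
            rw [bumpF_far hm30 hfar1 e, bumpF_far hm30 hfar2 e, bumpF_self] at h1
            have h2 : ((s:ℝ):𝕜) ≠ 0 := by
              rw [ne_eq, RCLike.ofReal_eq_zero]
              exact hs0.ne'
            have h3 : μ1 0 + μ2 0 = 0 := by simp
            rw [h3] at h1
            have h4 := h1.symm
            rcases mul_eq_zero.1 h4 with h | h
            · exact absurd h h2
            · simpa using h
          exact unit_ne_zero (hμf ν3 hν3) hμ3zero
  -- the common node point is x itself
  have hxw : xf w hw = x := by
    have heq2 : ∀ h : X → E, IsBddLip h → lam (h x) = μf w hw (h (xf w hw)) := by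
      intro h hh
      rw [← hseed h hh, hrel w hw h hh]
    exact ((node_unique (unit_ne_zero hlam) heq2).1).symm
  -- conclusion by duality separation
  intro h hh
  have hsub : ∀ (g : StrongDual 𝕜 E), ‖g‖ = 1 →
      g (T h y - T (constF X (h x)) y) = 0 := by
    intro g hg
    have hgx : xf g hg = x := (hconst g w hg hw).trans hxw
    have h1 := hrel g hg h hh
    have h2 := hrel g hg (constF X (h x)) (isBddLip_const _)
    rw [hgx] at h1 h2
    have h3 : constF X (h x) x = h x := rfl
    rw [h3] at h2
    rw [g.map_sub, h1, h2, sub_self]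
  by_contra hξ
  have hξ0 : T h y - T (constF X (h x)) y ≠ 0 := sub_ne_zero.2 hξ
  obtain ⟨g, hg1, hg2⟩ := exists_dual_vector 𝕜 _ (norm_ne_zero_iff.2 hξ0)
  have h5 := hsub g hg1
  rw [hg2] at h5
  rw [RCLike.ofReal_eq_zero] at h5
  exact hξ0 (norm_eq_zero.mp h5)

/-- **core theorem**: a surjective isometry with a seed support relation at `(y,x)` acts at
`y` as a surjective linear isometry of `E` applied to the value at `x`. -/
theorem core [Nonempty X] [Nonempty Y] [CompactSpace X] [CompactSpace Y]
    (hsm : IsSmooth 𝕜 E) (hrefl : IsReflexiveSp 𝕜 E)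
    {T : (X → E) → (Y → E)} (hT : IsLipIso 𝕜 T) (y : Y) (x : X)
    {w lam : StrongDual 𝕜 E} (hw : ‖w‖ = 1) (hlam : ‖lam‖ = 1)
    (hseed : ∀ h, IsBddLip h → w (T h y) = lam (h x)) :
    ∃ B : E ≃ₗᵢ[𝕜] E, ∀ h, IsBddLip h → T h y = B (h x) := by
  have hfw := core_fun hsm hrefl hT y x hw hlam hseed
  have hseed' : ∀ k, IsBddLip k → lam (invT T hT k x) = w (k y) := by
    intro k hk
    have h1 := hseed (invT T hT k) (invT_bdd hT hk)
    rw [T_invT hT hk] at h1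
    exact h1.symm
  have hfw' := core_fun hsm hrefl (invT_isLipIso hT) x y hlam hw hseed'
  set Bf : E → E := fun e => T (constF X e) y with hBfdef
  set Bg : E → E := fun e => invT T hT (constF Y e) x with hBgdef
  have hBadd : ∀ e e' : E, Bf (e + e') = Bf e + Bf e' := by
    intro e e'
    have h1 : constF X (e + e') = constF X e + constF X e' := by funext z; rfl
    show T (constF X (e + e')) y = T (constF X e) y + T (constF X e') y
    rw [h1, hT.map_add _ _ (isBddLip_const e) (isBddLip_const e')]
    rfl
  have hBsmul : ∀ (c : 𝕜) (e : E), Bf (c • e) = c • Bf e := by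
    intro c e
    have h1 : constF X (c • e) = c • constF X e := by funext z; rfl
    show T (constF X (c • e)) y = c • T (constF X e) y
    rw [h1, hT.map_smul c _ (isBddLip_const e)]
    rfl
  have hBle : ∀ e : E, ‖Bf e‖ ≤ ‖e‖ := by
    intro e
    have h1 := norm_le_lipNorm (hT.mapsLip _ (isBddLip_const e)) y
    rwa [hT.norm_map _ (isBddLip_const e), lipNorm_const] at h1
  have hBgle : ∀ e : E, ‖Bg e‖ ≤ ‖e‖ := by
    intro e
    have h1 := norm_le_lipNorm ((invT_isLipIso hT).mapsLip _ (isBddLip_const e)) x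
    rwa [(invT_isLipIso hT).norm_map _ (isBddLip_const e), lipNorm_const] at h1
  have hBB' : ∀ e : E, Bg (Bf e) = e := by
    intro e
    have h1 := hfw' (T (constF X e)) (hT.mapsLip _ (isBddLip_const e))
    rw [invT_T hT (isBddLip_const e)] at h1
    exact h1.symm
  have hB'B : ∀ e : E, Bf (Bg e) = e := by
    intro e
    have h1 := hfw (invT T hT (constF Y e)) (invT_bdd hT (isBddLip_const e))
    rw [T_invT hT (isBddLip_const e)] at h1
    exact h1.symm
  have hBiso : ∀ e : E, ‖Bf e‖ = ‖e‖ := by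
    intro e
    refine le_antisymm (hBle e) ?_
    have h1 := hBgle (Bf e)
    rwa [hBB' e] at h1
  refine ⟨{ toLinearEquiv :=
              { toFun := Bf
                map_add' := hBadd
                map_smul' := fun c e => hBsmul c e
                invFun := Bg
                left_inv := hBB'
                right_inv := hB'B }
            norm_map' := hBiso }, ?_⟩
  intro h hh
  exact hfw h hh

end AuxL
end CoreSection
end AuxProof

open AuxL

/-- The map `V(e) = Δ(f)(y)` (for any `f` with `f(x) = e`) is well defined and is a 2-local
isometry on `E`; if `E` is 2-iso-reflexive, it is a surjective linear isometry. -/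
theorem stmt16 {𝕜 X Y E : Type*} [RCLike 𝕜]
    [MetricSpace X] [CompactSpace X] [PathConnectedSpace X]
    [MetricSpace Y] [CompactSpace Y] [PathConnectedSpace Y]
    [NormedAddCommGroup E] [NormedSpace 𝕜 E] [CompleteSpace E]
    (hsm : IsSmooth 𝕜 E) (hrefl : IsReflexiveSp 𝕜 E)
    (Δ : (X → E) → (Y → E)) (hΔ : Is2LocalLipIso 𝕜 Δ)
    (y : Y) (x : X) (u v : StrongDual 𝕜 E) (hu : ‖u‖ = 1) (hv : ‖v‖ = 1)
    (hsupp : ∀ h : X → E, IsBddLip h → v (Δ h y) = u (h x)) :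
    (∀ f₁ f₂ : X → E, IsBddLip f₁ → IsBddLip f₂ → f₁ x = f₂ x → Δ f₁ y = Δ f₂ y) ∧
    ∃ V : E → E,
      (∀ f : X → E, IsBddLip f → V (f x) = Δ f y) ∧
      (∀ e₁ e₂ : E, ∃ W : E ≃ₗᵢ[𝕜] E, V e₁ = W e₁ ∧ V e₂ = W e₂) ∧
      (TwoIsoReflexive 𝕜 E →
        (∀ a b : E, V (a + b) = V a + V b) ∧ (∀ (c : 𝕜) (a : E), V (c • a) = c • V a) ∧
        Function.Surjective V ∧ ∀ a : E, ‖V a‖ = ‖a‖) := by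
  haveI hneX : Nonempty X := PathConnectedSpace.nonempty
  haveI hneY : Nonempty Y := PathConnectedSpace.nonempty
  classical
  obtain ⟨e₀, he₀, hue₀⟩ := attain hrefl u hu
  set p : X → E := bumpF 𝕜 2 x e₀ with hpdef
  have hpb : IsBddLip p := isBddLip_bumpF two_pos x e₀
  have hpx : p x = e₀ := bumpF_self 2 x e₀
  -- a seed relation for any pair isometry matching `Δ` at `p`
  have seedp : ∀ T : (X → E) → (Y → E), IsLipIso 𝕜 T → Δ p = T p →
      ∀ h, IsBddLip h → v (T h y) = u (h x) := by
    intro T hT hTp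
    have hNF : IsNF (fun h : X → E => v (T h y)) := isNF_eval hT v hv.le y
    have hval : v (T p y) = 1 := by
      rw [← congrFun hTp y, hsupp p hpb, hpx, hue₀]
    obtain ⟨ν, hν1, hνe, hνeval⟩ := lemmaA hNF he₀ hval
    have hνu : ν = u := by
      obtain ⟨u₀, -, hu₀⟩ := hsm e₀ he₀
      rw [hu₀ ν ⟨hν1, hνe⟩, hu₀ u ⟨hu, hue₀⟩]
    intro h hh
    rw [hνeval h hh, hνu]
  -- `Δ` kills the zero function
  have hΔ0 : Δ (0 : X → E) = 0 := by
    obtain ⟨T, hT, hT0, -⟩ := hΔ 0 0 isBddLip_zero isBddLip_zero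
    have h3 : T (0 : X → E) = 0 := by
      have h4 := hT.map_smul 0 0 isBddLip_zero
      rw [zero_smul, zero_smul] at h4
      exact h4
    rw [hT0, h3]
  set V : E → E := fun e => Δ (bumpF 𝕜 2 x e) y with hVdef
  have hV0 : V (0 : E) = 0 := by
    have h2 : bumpF 𝕜 2 x (0 : E) = (0 : X → E) := by
      funext z
      show _ • (0 : E) = 0
      rw [smul_zero]
    show Δ (bumpF 𝕜 2 x (0 : E)) y = 0
    rw [h2, hΔ0]
    rfl
  have hVB : ∀ e : E, ∃ B : E ≃ₗᵢ[𝕜] E, V e = B e := by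
    intro e
    obtain ⟨T, hT, hTf, hTp⟩ := hΔ (bumpF 𝕜 2 x e) p (isBddLip_bumpF two_pos x e) hpb
    obtain ⟨B, hB⟩ := core hsm hrefl hT y x hv hu (seedp T hT hTp)
    refine ⟨B, ?_⟩
    show Δ (bumpF 𝕜 2 x e) y = B e
    have h1 := hB (bumpF 𝕜 2 x e) (isBddLip_bumpF two_pos x e)
    rw [congrFun hTf y, h1, bumpF_self]
  have hVnorm : ∀ e : E, ‖V e‖ = ‖e‖ := by
    intro e
    obtain ⟨B, hB⟩ := hVB e
    rw [hB, B.norm_map]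
  -- the pair lemma
  have hpair : ∀ f : X → E, IsBddLip f → ∀ e₂ : E, e₂ ≠ 0 →
      ∃ B : E ≃ₗᵢ[𝕜] E, Δ f y = B (f x) ∧ V e₂ = B e₂ := by
    intro f hf e₂ he₂
    have hbb : IsBddLip (bumpF 𝕜 2 x e₂) := isBddLip_bumpF two_pos x e₂
    obtain ⟨T, hT, hTf, hTb⟩ := hΔ f (bumpF 𝕜 2 x e₂) hf hbb
    have hVne : V e₂ ≠ 0 := by
      rw [← norm_ne_zero_iff, hVnorm]
      exact norm_ne_zero_iff.2 he₂
    obtain ⟨w', hw'1, hw'2⟩ := exists_dual_vector 𝕜 (V e₂) (norm_ne_zero_iff.2 hVne)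
    set c : 𝕜 := ((‖e₂‖⁻¹ : ℝ) : 𝕜) with hcdef
    set ee : E := c • e₂ with heedef
    have hne2 : (0 : ℝ) < ‖e₂‖ := norm_pos_iff.2 he₂
    have hee : ‖ee‖ = 1 := by
      rw [heedef, norm_smul, hcdef, RCLike.norm_ofReal, abs_of_pos (inv_pos.2 hne2)]
      field_simp
    have hΛNF : IsNF (fun h : X → E => w' (T h y)) := isNF_eval hT w' hw'1.le y
    have hΛpeak : w' (T (bumpF 𝕜 2 x ee) y) = 1 := by
      have h1 : bumpF 𝕜 2 x ee = c • bumpF 𝕜 2 x e₂ := by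
        rw [heedef]; exact bumpF_smul 2 x c e₂
      rw [h1, hT.map_smul c _ hbb]
      have h2 : (c • T (bumpF 𝕜 2 x e₂)) y = c • (T (bumpF 𝕜 2 x e₂) y) := rfl
      rw [h2, w'.map_smul, ← congrFun hTb y]
      show c • w' (V e₂) = 1
      rw [hw'2, hVnorm, smul_eq_mul, hcdef, ← RCLike.ofReal_mul,
        inv_mul_cancel₀ hne2.ne']
      simp
    obtain ⟨ν, hν1, hνee, hνeval⟩ := lemmaA hΛNF hee hΛpeak
    obtain ⟨B, hB⟩ := core hsm hrefl hT y x hw'1 hν1 (fun h hh => hνeval h hh)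
    refine ⟨B, ?_, ?_⟩
    · rw [congrFun hTf y, hB f hf]
    · show Δ (bumpF 𝕜 2 x e₂) y = B e₂
      rw [congrFun hTb y, hB (bumpF 𝕜 2 x e₂) hbb, bumpF_self]
  -- well-definedness
  have hkey : ∀ f : X → E, IsBddLip f → Δ f y = V (f x) := by
    intro f hf
    by_cases he : f x = 0
    · obtain ⟨T, hT, hTf, hTp⟩ := hΔ f p hf hpb
      obtain ⟨B, hB⟩ := core hsm hrefl hT y x hv hu (seedp T hT hTp)
      rw [congrFun hTf y, hB f hf, he, hV0, map_zero]
    · obtain ⟨B, h1, h2⟩ := hpair f hf (f x) he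
      rw [h1, h2]
  -- 2-locality of V
  have hloc : ∀ e₁ e₂ : E, ∃ W : E ≃ₗᵢ[𝕜] E, V e₁ = W e₁ ∧ V e₂ = W e₂ := by
    intro e₁ e₂
    by_cases h2 : e₂ = 0
    · by_cases h1 : e₁ = 0
      · refine ⟨LinearIsometryEquiv.refl 𝕜 E, ?_, ?_⟩
        · rw [h1, hV0]; simp
        · rw [h2, hV0]; simp
      · obtain ⟨B, hB1, hB2⟩ := hpair (bumpF 𝕜 2 x e₂) (isBddLip_bumpF two_pos x e₂) e₁ h1
        refine ⟨B, hB2, ?_⟩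
        rw [bumpF_self] at hB1
        exact hB1
    · obtain ⟨B, hB1, hB2⟩ := hpair (bumpF 𝕜 2 x e₁) (isBddLip_bumpF two_pos x e₁) e₂ h2
      refine ⟨B, ?_, hB2⟩
      rw [bumpF_self] at hB1
      exact hB1
  refine ⟨fun f₁ f₂ hf₁ hf₂ hx => ?_, V, fun f hf => (hkey f hf).symm, hloc, fun htir => ?_⟩
  · rw [hkey f₁ hf₁, hkey f₂ hf₂, hx]
  · obtain ⟨hadd, hsmul, hsurj⟩ := htir V hloc
    exact ⟨hadd, hsmul, hsurj, hVnorm⟩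
end
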